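/- If A ⊆ ℝ^{n+1} is a semialgebraic set and p : ℝ^{n+1} → ℝⁿ is the linear projection forgetting the last coordinate, then the image p(A) is a semialgebraic subset of ℝⁿ (Tarski–Seidenberg theorem). -/

import Mathlib

/-- A basic semialgebraic subset of `ℝⁿ`: a set of the form
`{x : p(x) = 0, q₁(x) > 0, …, q_k(x) > 0}` for real polynomials `p, q₁, …, q_k`. -/
def IsBasicSemialgebraic {n : ℕ} (A : Set (Fin n → ℝ)) : Prop :=
  ∃ (p : MvPolynomial (Fin n) ℝ) (k : ℕ) (q : Fin k → MvPolynomial (Fin n) ℝ),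
    A = {x : Fin n → ℝ |
      MvPolynomial.eval x p = 0 ∧ ∀ i : Fin k, 0 < MvPolynomial.eval x (q i)}

/-- A subset of `ℝⁿ` is semialgebraic if it is a finite union of basic semialgebraic
sets. -/
def IsSemialgebraic {n : ℕ} (A : Set (Fin n → ℝ)) : Prop :=
  ∃ (m : ℕ) (B : Fin m → Set (Fin n → ℝ)),
    (∀ i, IsBasicSemialgebraic (B i)) ∧ A = ⋃ i, B i


noncomputable section
open Polynomial Set

/-- Integer-valued sign of a real number. -/
def sg (r : ℝ) : ℤ := if 0 < r then 1 else if r < 0 then -1 else 0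

lemma sg_pos {r : ℝ} (h : 0 < r) : sg r = 1 := by simp [sg, h]
lemma sg_neg {r : ℝ} (h : r < 0) : sg r = -1 := by simp [sg, h, asymm h]
lemma sg_zero : sg 0 = 0 := by simp [sg]
lemma sg_eq_zero_iff {r : ℝ} : sg r = 0 ↔ r = 0 := by
  rcases lt_trichotomy r 0 with h|h|h
  · simp [sg, h, not_lt.2 h.le, h.ne]
  · simp [sg, h]
  · simp [sg, h, h.ne', h.le]
lemma sg_eq_one_iff {r : ℝ} : sg r = 1 ↔ 0 < r := by
  rcases lt_trichotomy r 0 with h|h|h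
  · simp [sg, h, not_lt.2 h.le, h.ne]
  · simp [sg, h]
  · simp [sg, h, h.ne', h.le]
lemma sg_eq_negone_iff {r : ℝ} : sg r = -1 ↔ r < 0 := by
  rcases lt_trichotomy r 0 with h|h|h
  · simp [sg, h, not_lt.2 h.le, h.ne]
  · simp [sg, h]
  · simp [sg, h, h.ne', h.le]
lemma sg_mul (a b : ℝ) : sg (a * b) = sg a * sg b := by
  rcases lt_trichotomy a 0 with h|h|h <;> rcases lt_trichotomy b 0 with h'|h'|h'
  · rw [sg_pos (mul_pos_of_neg_of_neg h h'), sg_neg h, sg_neg h']; ring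
  · simp [h', sg_zero, sg_neg h]
  · rw [sg_neg (mul_neg_of_neg_of_pos h h'), sg_neg h, sg_pos h']; ring
  · simp [h, sg_zero, sg_neg h']
  · simp [h, sg_zero]
  · simp [h, sg_zero]
  · rw [sg_neg (mul_neg_of_pos_of_neg h h'), sg_pos h, sg_neg h']; ring
  · simp [h', sg_zero, sg_pos h]
  · rw [sg_pos (mul_pos h h'), sg_pos h, sg_pos h']; ring
lemma sg_mem {r : ℝ} : sg r ∈ ({0, 1, -1} : Set ℤ) := by
  rcases lt_trichotomy r 0 with h|h|h
  · simp [sg, h, not_lt.2 h.le, h.ne]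
  · simp [sg, h]
  · simp [sg, h, h.ne', h.le]
lemma sg_pow (a : ℝ) (m : ℕ) : sg (a ^ m) = sg a ^ m := by
  induction m with
  | zero => simp [sg_pos, zero_lt_one]
  | succ k ih => rw [pow_succ, pow_succ, sg_mul, ih]
lemma sg_sq_mul (c a : ℝ) (hc : c ≠ 0) : sg (c ^ 2 * a) = sg a := by
  rw [sg_mul, sg_pow]
  rcases lt_trichotomy c 0 with h|h|h
  · rw [sg_neg h]; ring
  · exact absurd h hc
  · rw [sg_pos h]; ring
lemma sg_neg' (a : ℝ) : sg (-a) = - sg a := by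
  rcases lt_trichotomy a 0 with h|h|h
  · rw [sg_neg h, sg_pos (by linarith)]; ring
  · simp [h, sg_zero]
  · rw [sg_pos h, sg_neg (by linarith)]
/-! ### Closure properties -/

abbrev MvP (n : ℕ) := MvPolynomial (Fin n) ℝ

def IsBasicSemialgebraic' {n : ℕ} (A : Set (Fin n → ℝ)) : Prop :=
  ∃ (p : MvPolynomial (Fin n) ℝ) (k : ℕ) (q : Fin k → MvPolynomial (Fin n) ℝ),
    A = {x : Fin n → ℝ |
      MvPolynomial.eval x p = 0 ∧ ∀ i : Fin k, 0 < MvPolynomial.eval x (q i)}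

def IsSemialgebraic' {n : ℕ} (A : Set (Fin n → ℝ)) : Prop :=
  ∃ (m : ℕ) (B : Fin m → Set (Fin n → ℝ)),
    (∀ i, IsBasicSemialgebraic' (B i)) ∧ A = ⋃ i, B i

variable {n : ℕ}

lemma isSemialgebraic_empty : IsSemialgebraic' (∅ : Set (Fin n → ℝ)) :=
  ⟨0, Fin.elim0, fun i => i.elim0, by simp⟩

lemma IsBasicSemialgebraic'.isSemialgebraic {A : Set (Fin n → ℝ)}
    (h : IsBasicSemialgebraic' A) : IsSemialgebraic' A :=
  ⟨1, fun _ => A, fun _ => h, (Set.iUnion_const A).symm⟩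

lemma isBasicSemialgebraic_univ : IsBasicSemialgebraic' (Set.univ : Set (Fin n → ℝ)) :=
  ⟨0, 0, Fin.elim0, by ext x; simp⟩

lemma iUnion_addCases {α : Type*} {m1 m2 : ℕ} (B1 : Fin m1 → Set α) (B2 : Fin m2 → Set α) :
    (⋃ i, Fin.addCases B1 B2 i) = (⋃ i, B1 i) ∪ ⋃ i, B2 i := by
  ext x
  simp only [Set.mem_iUnion, Set.mem_union]
  constructor
  · rintro ⟨i, hi⟩
    induction i using Fin.addCases with
    | left j => rw [Fin.addCases_left] at hi; exact Or.inl ⟨j, hi⟩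
    | right j => rw [Fin.addCases_right] at hi; exact Or.inr ⟨j, hi⟩
  · rintro (⟨j, hj⟩ | ⟨j, hj⟩)
    · exact ⟨Fin.castAdd m2 j, by rw [Fin.addCases_left]; exact hj⟩
    · exact ⟨Fin.natAdd m1 j, by rw [Fin.addCases_right]; exact hj⟩

lemma IsSemialgebraic'.union {A B : Set (Fin n → ℝ)} (hA : IsSemialgebraic' A)
    (hB : IsSemialgebraic' B) : IsSemialgebraic' (A ∪ B) := by
  obtain ⟨m1, B1, h1, rfl⟩ := hA
  obtain ⟨m2, B2, h2, rfl⟩ := hB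
  refine ⟨m1 + m2, Fin.addCases B1 B2, fun i => ?_, (iUnion_addCases B1 B2).symm⟩
  induction i using Fin.addCases with
  | left j => simp only [Fin.addCases_left]; exact h1 j
  | right j => simp only [Fin.addCases_right]; exact h2 j

lemma isSemialgebraic_iUnion_fin {m : ℕ} (B : Fin m → Set (Fin n → ℝ))
    (h : ∀ i, IsSemialgebraic' (B i)) : IsSemialgebraic' (⋃ i, B i) := by
  induction m with
  | zero => simpa using isSemialgebraic_empty
  | succ m ih =>
    have : (⋃ i, B i) = (⋃ i : Fin m, B i.castSucc) ∪ B (Fin.last m) := by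
      ext x
      simp only [Set.mem_iUnion, Set.mem_union]
      constructor
      · rintro ⟨i, hi⟩
        rcases Fin.eq_castSucc_or_eq_last i with ⟨j, rfl⟩ | rfl
        · exact Or.inl ⟨j, hi⟩
        · exact Or.inr hi
      · rintro (⟨j, hj⟩ | hl)
        · exact ⟨j.castSucc, hj⟩
        · exact ⟨Fin.last m, hl⟩
    rw [this]
    exact (ih _ fun i => h i.castSucc).union (h (Fin.last m))

lemma isSemialgebraic_iUnion {ι : Type*} [Fintype ι] (B : ι → Set (Fin n → ℝ))
    (h : ∀ i, IsSemialgebraic' (B i)) : IsSemialgebraic' (⋃ i, B i) := by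
  have e := (Fintype.equivFin ι).symm
  have : (⋃ i, B i) = ⋃ j, B (e j) := by
    ext x; simp only [Set.mem_iUnion]
    exact ⟨fun ⟨i, hi⟩ => ⟨e.symm i, by simpa using hi⟩, fun ⟨j, hj⟩ => ⟨e j, hj⟩⟩
  rw [this]
  exact isSemialgebraic_iUnion_fin _ fun j => h (e j)

lemma isSemialgebraic_biUnion {ι : Type*} (s : Finset ι) (B : ι → Set (Fin n → ℝ))
    (h : ∀ i ∈ s, IsSemialgebraic' (B i)) : IsSemialgebraic' (⋃ i ∈ s, B i) := by
  have : (⋃ i ∈ s, B i) = ⋃ i : {i // i ∈ s}, B i.1 := by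
    ext x; simp
  rw [this]
  exact isSemialgebraic_iUnion _ fun i => h i.1 i.2

lemma IsBasicSemialgebraic'.inter {A B : Set (Fin n → ℝ)} (hA : IsBasicSemialgebraic' A)
    (hB : IsBasicSemialgebraic' B) : IsBasicSemialgebraic' (A ∩ B) := by
  obtain ⟨p1, k1, q1, rfl⟩ := hA
  obtain ⟨p2, k2, q2, rfl⟩ := hB
  refine ⟨p1 ^ 2 + p2 ^ 2, k1 + k2, Fin.addCases q1 q2, ?_⟩
  ext x
  simp only [Set.mem_inter_iff, Set.mem_setOf_eq, map_add, map_pow]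
  constructor
  · rintro ⟨⟨e1, i1⟩, ⟨e2, i2⟩⟩
    refine ⟨by rw [e1, e2]; ring, fun i => ?_⟩
    induction i using Fin.addCases with
    | left j => rw [Fin.addCases_left]; exact i1 j
    | right j => rw [Fin.addCases_right]; exact i2 j
  · rintro ⟨e, hq⟩
    have h1 : MvPolynomial.eval x p1 = 0 ∧ MvPolynomial.eval x p2 = 0 := by
      constructor <;> nlinarith [sq_nonneg (MvPolynomial.eval x p1), sq_nonneg (MvPolynomial.eval x p2)]
    exact ⟨⟨h1.1, fun j => by simpa using hq (Fin.castAdd k2 j)⟩,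
      ⟨h1.2, fun j => by simpa using hq (Fin.natAdd k1 j)⟩⟩

lemma IsSemialgebraic'.inter {A B : Set (Fin n → ℝ)} (hA : IsSemialgebraic' A)
    (hB : IsSemialgebraic' B) : IsSemialgebraic' (A ∩ B) := by
  obtain ⟨m1, B1, h1, rfl⟩ := hA
  obtain ⟨m2, B2, h2, rfl⟩ := hB
  have : (⋃ i, B1 i) ∩ (⋃ i, B2 i) = ⋃ p : Fin m1 × Fin m2, B1 p.1 ∩ B2 p.2 := by
    ext x
    simp only [Set.mem_inter_iff, Set.mem_iUnion]
    exact ⟨fun ⟨⟨i, hi⟩, ⟨j, hj⟩⟩ => ⟨⟨i, j⟩, hi, hj⟩, fun ⟨⟨i, j⟩, hi, hj⟩ => ⟨⟨i, hi⟩, ⟨j, hj⟩⟩⟩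
  rw [this]
  exact isSemialgebraic_iUnion _ fun p => ((h1 p.1).inter (h2 p.2)).isSemialgebraic

lemma isSemialgebraic_iInter {ι : Type*} [Fintype ι] (B : ι → Set (Fin n → ℝ))
    (h : ∀ i, IsSemialgebraic' (B i)) : IsSemialgebraic' (⋂ i, B i) := by
  classical
  have this : ∀ s : Finset ι, IsSemialgebraic' (⋂ i ∈ s, B i) := by
    intro s
    induction s using Finset.induction with
    | empty => simpa using isBasicSemialgebraic_univ.isSemialgebraic
    | @insert a s' hx ih =>
      have : (⋂ i ∈ insert a s', B i) = B a ∩ ⋂ i ∈ s', B i := by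
        ext x; simp
      rw [this]
      exact (h a).inter ih
  have h2 : (⋂ i, B i) = ⋂ i ∈ Finset.univ, B i := by ext x; simp
  rw [h2]
  exact this Finset.univ

lemma isSemialgebraic_sgn (p : MvP n) (σ : ℤ) :
    IsSemialgebraic' {x | sg (MvPolynomial.eval x p) = σ} := by
  rcases eq_or_ne σ 0 with rfl | h0
  · refine IsBasicSemialgebraic'.isSemialgebraic ⟨p, 0, Fin.elim0, ?_⟩
    ext x; simp [sg_eq_zero_iff]
  rcases eq_or_ne σ 1 with rfl | h1
  · refine IsBasicSemialgebraic'.isSemialgebraic ⟨0, 1, fun _ => p, ?_⟩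
    ext x; simp [sg_eq_one_iff]
  rcases eq_or_ne σ (-1) with rfl | hm
  · refine IsBasicSemialgebraic'.isSemialgebraic ⟨0, 1, fun _ => -p, ?_⟩
    ext x; simp [sg_eq_negone_iff]
  · have : {x | sg (MvPolynomial.eval x p) = σ} = ∅ := by
      ext x
      simp only [Set.mem_setOf_eq, Set.mem_empty_iff_false, iff_false]
      intro h
      rcases sg_mem (r := MvPolynomial.eval x p) with h' | h' | h' <;>
        simp_all
    rw [this]; exact isSemialgebraic_empty

lemma isSemialgebraic_sgn_family {k : ℕ} (p : Fin k → MvP n) (σ : Fin k → ℤ) :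
    IsSemialgebraic' {x | ∀ i, sg (MvPolynomial.eval x (p i)) = σ i} := by
  have : {x | ∀ i, sg (MvPolynomial.eval x (p i)) = σ i} =
      ⋂ i, {x | sg (MvPolynomial.eval x (p i)) = σ i} := by ext x; simp
  rw [this]
  exact isSemialgebraic_iInter _ fun i => isSemialgebraic_sgn (p i) (σ i)

/-! ### Local jump algebra for Cauchy indices -/

open Polynomial in
/-- The cofactor of `(X - y)^mult` in `p`. -/
noncomputable def red (p : Polynomial ℝ) (y : ℝ) : Polynomial ℝ :=
  p /ₘ (X - C y) ^ (rootMultiplicity y p)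

namespace TSJ
open Polynomial

lemma red_spec (p : ℝ[X]) (y : ℝ) :
    (X - C y) ^ (rootMultiplicity y p) * red p y = p :=
  pow_mul_divByMonic_rootMultiplicity_eq p y

lemma red_eval_ne {p : ℝ[X]} (hp : p ≠ 0) (y : ℝ) : (red p y).eval y ≠ 0 :=
  eval_divByMonic_pow_rootMultiplicity_ne_zero y hp

lemma mult_red_unique {p w : ℝ[X]} {y : ℝ} {a : ℕ}
    (hw : w.eval y ≠ 0) (h : p = (X - C y) ^ a * w) :
    rootMultiplicity y p = a ∧ red p y = w := by
  have hw0 : w ≠ 0 := fun h0 => hw (by simp [h0])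
  have hp0 : p ≠ 0 := by
    rw [h]; exact mul_ne_zero (pow_ne_zero _ (X_sub_C_ne_zero y)) hw0
  have hm : rootMultiplicity y p = a := by
    rw [h, rootMultiplicity_mul (by rw [← h]; exact hp0), rootMultiplicity_X_sub_C_pow,
      rootMultiplicity_eq_zero (by simpa [IsRoot] using hw), add_zero]
  refine ⟨hm, ?_⟩
  have h1 := red_spec p y
  rw [hm] at h1
  have h2 : (X - C y) ^ a * red p y = (X - C y) ^ a * w := by rw [h1, ← h]
  exact mul_left_cancel₀ (pow_ne_zero _ (X_sub_C_ne_zero y)) h2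

/-- Cauchy jump of `h/f` at `y`. -/
noncomputable def jmp (f h : ℝ[X]) (y : ℝ) : ℤ :=
  if f = 0 ∨ h = 0 then 0
  else if rootMultiplicity y h < rootMultiplicity y f ∧
      Odd (rootMultiplicity y f - rootMultiplicity y h)
    then sg ((red f y).eval y * (red h y).eval y) else 0

/-- Half of the sign change of `p` at `y`. -/
noncomputable def hjmp (p : ℝ[X]) (y : ℝ) : ℤ :=
  if p = 0 then 0 else
  if Odd (rootMultiplicity y p) then sg ((red p y).eval y) else 0

lemma jmp_eq_zero_of_not_root {f h : ℝ[X]} {y : ℝ} (hy : ¬ f.IsRoot y) :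
    jmp f h y = 0 := by
  unfold jmp
  split
  · rfl
  · rw [if_neg]
    rintro ⟨h1, -⟩
    rw [rootMultiplicity_eq_zero hy] at h1
    omega

lemma ite_sign_arith (a b : ℕ) (s : ℤ) :
    ((if b < a ∧ Odd (a - b) then s else 0) + if a < b ∧ Odd (b - a) then s else 0)
      = if Odd (a + b) then s else 0 := by
  simp only [Nat.odd_iff]
  split_ifs <;> first | (exfalso; omega) | simp

lemma jmp_add_jmp {f h : ℝ[X]} (hf : f ≠ 0) (hh : h ≠ 0) (y : ℝ) :
    jmp f h y + jmp h f y = hjmp (f * h) y := by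
  have hfh : f * h ≠ 0 := mul_ne_zero hf hh
  set a := rootMultiplicity y f with ha
  set b := rootMultiplicity y h with hb
  have hprod : f * h = (X - C y) ^ (a + b) * (red f y * red h y) := by
    rw [pow_add]
    conv_lhs => rw [← red_spec f y, ← red_spec h y]
    ring
  have hev : (red f y * red h y).eval y ≠ 0 := by
    rw [eval_mul]; exact mul_ne_zero (red_eval_ne hf y) (red_eval_ne hh y)
  obtain ⟨hm, hr⟩ := mult_red_unique hev hprod
  have e1 : jmp f h y = if b < a ∧ Odd (a - b)
      then sg ((red f y).eval y * (red h y).eval y) else 0 := by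
    unfold jmp
    rw [if_neg (show ¬(f = 0 ∨ h = 0) by simp [hf, hh])]
  have e2 : jmp h f y = if a < b ∧ Odd (b - a)
      then sg ((red f y).eval y * (red h y).eval y) else 0 := by
    unfold jmp
    rw [if_neg (show ¬(h = 0 ∨ f = 0) by simp [hf, hh]), mul_comm ((red h y).eval y)]
  have e3 : hjmp (f * h) y = if Odd (a + b)
      then sg ((red f y).eval y * (red h y).eval y) else 0 := by
    unfold hjmp
    rw [if_neg hfh, hm, hr, eval_mul]
  rw [e1, e2, e3]
  exact ite_sign_arith a b _

lemma jmp_sq_smul {f h : ℝ[X]} {c : ℝ} (hc : c ≠ 0) (y : ℝ) :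
    jmp f (C c ^ 2 * h) y = jmp f h y := by
  rcases eq_or_ne f 0 with rfl | hf
  · unfold jmp; simp
  rcases eq_or_ne h 0 with rfl | hh
  · unfold jmp; simp
  have hch : C c ^ 2 * h ≠ 0 := by
    refine mul_ne_zero (pow_ne_zero _ ?_) hh
    simpa using hc
  have hfac : C c ^ 2 * h = (X - C y) ^ (rootMultiplicity y h) * (C c ^ 2 * red h y) := by
    conv_lhs => rw [← red_spec h y]
    ring
  have hev : (C c ^ 2 * red h y).eval y ≠ 0 := by
    simp only [eval_mul, eval_pow, eval_C]
    exact mul_ne_zero (pow_ne_zero _ hc) (red_eval_ne hh y)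
  obtain ⟨hm, hr⟩ := mult_red_unique hev hfac
  have e1 : jmp f (C c ^ 2 * h) y = if rootMultiplicity y h < rootMultiplicity y f ∧
      Odd (rootMultiplicity y f - rootMultiplicity y h)
      then sg ((red f y).eval y * (C c ^ 2 * red h y).eval y) else 0 := by
    unfold jmp
    rw [if_neg (show ¬(f = 0 ∨ C c ^ 2 * h = 0) by simp [hf, hch]), hm, hr]
  have e2 : jmp f h y = if rootMultiplicity y h < rootMultiplicity y f ∧
      Odd (rootMultiplicity y f - rootMultiplicity y h)
      then sg ((red f y).eval y * (red h y).eval y) else 0 := by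
    unfold jmp
    rw [if_neg (show ¬(f = 0 ∨ h = 0) by simp [hf, hh])]
  rw [e1, e2]
  congr 1
  simp only [eval_mul, eval_pow, eval_C]
  rw [show (red f y).eval y * (c ^ 2 * (red h y).eval y)
      = c ^ 2 * ((red f y).eval y * (red h y).eval y) by ring, sg_sq_mul _ _ hc]

lemma mult_red_add {w v : ℝ[X]} {y : ℝ} (hw : w ≠ 0) (hv : v ≠ 0)
    (hlt : rootMultiplicity y w < rootMultiplicity y v) :
    w + v ≠ 0 ∧ rootMultiplicity y (w + v) = rootMultiplicity y w ∧
      (red (w + v) y).eval y = (red w y).eval y := by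
  set b := rootMultiplicity y w with hbdef
  set c := rootMultiplicity y v with hcdef
  have hfac : w + v = (X - C y) ^ b * (red w y + (X - C y) ^ (c - b) * red v y) := by
    rw [mul_add, ← mul_assoc, ← pow_add, show b + (c - b) = c by omega, red_spec, red_spec]
  have heval : (red w y + (X - C y) ^ (c - b) * red v y).eval y = (red w y).eval y := by
    have : c - b ≠ 0 := by omega
    simp [eval_add, eval_mul, eval_pow, zero_pow this]
  have hne : (red w y + (X - C y) ^ (c - b) * red v y).eval y ≠ 0 := by
    rw [heval]; exact red_eval_ne hw y
  obtain ⟨hm, hr⟩ := mult_red_unique hne hfac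
  refine ⟨?_, hm, by rw [hr, heval]⟩
  intro h0
  apply hne
  have hz : (X - C y) ^ b * (red w y + (X - C y) ^ (c - b) * red v y) = 0 := by
    rw [← hfac, h0]
  rcases mul_eq_zero.1 hz with h1 | h1
  · exact absurd h1 (pow_ne_zero _ (X_sub_C_ne_zero y))
  · rw [h1, eval_zero]

lemma jmp_translate {f q r : ℝ[X]} (hf : f ≠ 0) (y : ℝ) :
    jmp f (q * f + r) y = jmp f r y := by
  set a := rootMultiplicity y f with hadef
  have h0 : jmp f 0 y = 0 := by unfold jmp; simp
  rcases eq_or_ne r 0 with rfl | hr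
  · rw [add_zero, h0]
    rcases eq_or_ne q 0 with rfl | hq
    · rw [zero_mul]; exact h0
    · have hqf : q * f ≠ 0 := mul_ne_zero hq hf
      have e1 : jmp f (q * f) y = if rootMultiplicity y (q * f) < rootMultiplicity y f ∧
          Odd (rootMultiplicity y f - rootMultiplicity y (q * f))
          then sg ((red f y).eval y * (red (q * f) y).eval y) else 0 := by
        unfold jmp
        rw [if_neg (show ¬(f = 0 ∨ q * f = 0) by simp [hf, hqf])]
      rw [e1, if_neg]
      rintro ⟨hlt, -⟩
      rw [rootMultiplicity_mul hqf] at hlt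
      omega
  · rcases lt_or_ge (rootMultiplicity y r) a with hlt | hle
    · rcases eq_or_ne q 0 with rfl | hq
      · rw [zero_mul, zero_add]
      · have hqf : q * f ≠ 0 := mul_ne_zero hq hf
        have hmulqf : a ≤ rootMultiplicity y (q * f) := by
          rw [rootMultiplicity_mul hqf]; omega
        obtain ⟨hsum0, hm, he⟩ := mult_red_add hr hqf (lt_of_lt_of_le hlt hmulqf)
        rw [add_comm (q * f) r]
        have e1 : jmp f (r + q * f) y = if rootMultiplicity y (r + q * f) < rootMultiplicity y f ∧
            Odd (rootMultiplicity y f - rootMultiplicity y (r + q * f))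
            then sg ((red f y).eval y * (red (r + q * f) y).eval y) else 0 := by
          unfold jmp
          rw [if_neg (show ¬(f = 0 ∨ r + q * f = 0) by simp [hf, hsum0])]
        have e2 : jmp f r y = if rootMultiplicity y r < rootMultiplicity y f ∧
            Odd (rootMultiplicity y f - rootMultiplicity y r)
            then sg ((red f y).eval y * (red r y).eval y) else 0 := by
          unfold jmp
          rw [if_neg (show ¬(f = 0 ∨ r = 0) by simp [hf, hr])]
        rw [e1, e2, hm, he]
    · have hjr : jmp f r y = 0 := by
        unfold jmp
        rw [if_neg (show ¬(f = 0 ∨ r = 0) by simp [hf, hr]), if_neg]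
        rintro ⟨h1, -⟩; omega
      rw [hjr]
      rcases eq_or_ne (q * f + r) 0 with hz | hnz
      · unfold jmp; rw [if_pos (Or.inr hz)]
      · have hdvd : (X - C y) ^ a ∣ q * f + r := by
          have h1 : (X - C y) ^ a ∣ f := pow_rootMultiplicity_dvd f y
          have h2 : (X - C y) ^ a ∣ r :=
            (pow_dvd_pow _ hle).trans (pow_rootMultiplicity_dvd r y)
          exact dvd_add (h1.mul_left q) h2
        unfold jmp
        rw [if_neg (show ¬(f = 0 ∨ q * f + r = 0) by simp [hf, hnz]), if_neg]
        rintro ⟨h1, -⟩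
        have : a ≤ rootMultiplicity y (q * f + r) := (le_rootMultiplicity_iff hnz).2 hdvd
        omega

lemma jmp_deriv {f g : ℝ[X]} (hf : f ≠ 0) {y : ℝ} (hy : f.IsRoot y) :
    jmp f (derivative f * g) y = sg (g.eval y) := by
  set a := rootMultiplicity y f with hadef
  have ha1 : 1 ≤ a := (rootMultiplicity_pos hf).2 hy
  set f1 := red f y with hf1def
  have hf1 : f1.eval y ≠ 0 := red_eval_ne hf y
  have hderiv : derivative f = (X - C y) ^ (a - 1) * (C (a : ℝ) * f1 + (X - C y) * derivative f1) := by
    conv_lhs => rw [← red_spec f y, ← hadef, ← hf1def]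
    rw [derivative_mul, derivative_pow, derivative_sub, derivative_X, derivative_C, sub_zero,
      mul_one]
    have hsplit : (X - C y) ^ a = (X - C y) ^ (a - 1) * (X - C y) := by
      rw [← pow_succ]; congr 1; omega
    rw [hsplit]
    ring
  set u := C (a : ℝ) * f1 + (X - C y) * derivative f1 with hudef
  have hu : u.eval y = (a : ℝ) * f1.eval y := by
    simp [hudef, eval_add, eval_mul, eval_C]
  have huy : u.eval y ≠ 0 := by
    rw [hu]
    exact mul_ne_zero (by positivity) hf1
  rcases eq_or_ne g 0 with rfl | hg
  · rw [mul_zero]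
    unfold jmp
    simp [sg_zero]
  set c := rootMultiplicity y g with hcdef
  have hfac : derivative f * g = (X - C y) ^ (a - 1 + c) * (u * red g y) := by
    rw [hderiv, pow_add]
    conv_lhs => rw [← red_spec g y, ← hcdef]
    ring
  have hev : (u * red g y).eval y ≠ 0 := by
    rw [eval_mul]; exact mul_ne_zero huy (red_eval_ne hg y)
  obtain ⟨hm, hrr⟩ := mult_red_unique hev hfac
  have hfg0 : derivative f * g ≠ 0 := by
    rw [hfac]
    exact mul_ne_zero (pow_ne_zero _ (X_sub_C_ne_zero y)) fun hz => hev (by rw [hz]; simp)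
  have e1 : jmp f (derivative f * g) y = if rootMultiplicity y (derivative f * g) < rootMultiplicity y f ∧
      Odd (rootMultiplicity y f - rootMultiplicity y (derivative f * g))
      then sg ((red f y).eval y * (red (derivative f * g) y).eval y) else 0 := by
    unfold jmp
    rw [if_neg (show ¬(f = 0 ∨ derivative f * g = 0) by simp [hf, hfg0])]
  rw [e1, hm, hrr]
  rcases Nat.eq_zero_or_pos c with hc0 | hcpos
  · rw [if_pos (by constructor <;> [omega; (rw [show a - (a - 1 + c) = 1 by omega]; exact odd_one)])]
    have hgy : (red g y).eval y = g.eval y := by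
      conv_rhs => rw [← red_spec g y, ← hcdef, hc0]
      simp
    rw [eval_mul, hu, hgy]
    rw [show f1.eval y * ((a:ℝ) * f1.eval y * g.eval y) = (a : ℝ) * (f1.eval y)^2 * g.eval y by ring]
    rw [sg_mul, sg_mul, sg_pos (by positivity : (0:ℝ) < (a:ℝ)), sg_pow]
    rcases lt_trichotomy (f1.eval y) 0 with hh | hh | hh
    · rw [sg_neg hh]; ring
    · exact absurd hh hf1
    · rw [sg_pos hh]; ring
  · have hgy : g.eval y = 0 := by
      conv_lhs => rw [← red_spec g y, ← hcdef]
      simp [eval_mul, eval_pow, zero_pow (by omega : c ≠ 0)]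
    rw [hgy, sg_zero, if_neg]
    rintro ⟨h1, -⟩; omega

end TSJ
namespace TSJ
open Polynomial

/-- sign at `+∞` -/
noncomputable def einf (p : ℝ[X]) : ℤ := sg p.leadingCoeff
/-- sign at `-∞` -/
noncomputable def minf (p : ℝ[X]) : ℤ := (-1) ^ p.natDegree * sg p.leadingCoeff

lemma eventually_sg_atTop (p : ℝ[X]) : ∀ᶠ z in Filter.atTop, sg (p.eval z) = einf p := by
  rcases eq_or_ne p 0 with rfl | hp
  · simp [einf, sg_zero]
  rcases Nat.eq_zero_or_pos p.natDegree with h0 | hpos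
  · have hC := Polynomial.eq_C_of_natDegree_eq_zero h0
    refine Filter.Eventually.of_forall fun z => ?_
    rw [hC]
    simp [einf, leadingCoeff_C]
  · have hdeg : 0 < p.degree := natDegree_pos_iff_degree_pos.1 hpos
    rcases lt_trichotomy p.leadingCoeff 0 with hlc | hlc | hlc
    · have hneg := Polynomial.tendsto_atTop_of_leadingCoeff_nonneg (-p)
        (by simpa using hdeg) (by simp [hlc.le])
      filter_upwards [hneg.eventually_gt_atTop 0] with z hz
      rw [einf, sg_neg (by simpa using hz : p.eval z < 0), sg_neg hlc]
    · exact absurd (leadingCoeff_eq_zero.1 hlc) hp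
    · have hpos' := Polynomial.tendsto_atTop_of_leadingCoeff_nonneg p hdeg hlc.le
      filter_upwards [hpos'.eventually_gt_atTop 0] with z hz
      rw [einf, sg_pos hz, sg_pos hlc]

lemma no_sign_change {p : ℝ[X]} {t z : ℝ} (htz : t ≤ z)
    (hnr : ∀ c ∈ Set.Icc t z, p.eval c ≠ 0) : sg (p.eval t) = sg (p.eval z) := by
  rcases lt_trichotomy (p.eval t) 0 with h2 | h2 | h2
  · rcases lt_trichotomy (p.eval z) 0 with h3 | h3 | h3
    · rw [sg_neg h2, sg_neg h3]
    · exact absurd h3 (hnr z ⟨htz, le_refl z⟩)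
    · exfalso
      have hmem : (0:ℝ) ∈ Set.Icc (p.eval t) (p.eval z) := ⟨h2.le, h3.le⟩
      obtain ⟨c, hc, hc0⟩ := intermediate_value_Icc htz (p.continuous.continuousOn) hmem
      exact hnr c hc hc0
  · exact absurd h2 (hnr t ⟨le_refl t, htz⟩)
  · rcases lt_trichotomy (p.eval z) 0 with h3 | h3 | h3
    · exfalso
      have hmem : (0:ℝ) ∈ Set.Icc (p.eval z) (p.eval t) := ⟨h3.le, h2.le⟩
      obtain ⟨c, hc, hc0⟩ := intermediate_value_Icc' htz (p.continuous.continuousOn) hmem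
      exact hnr c hc hc0
    · exact absurd h3 (hnr z ⟨htz, le_refl z⟩)
    · rw [sg_pos h2, sg_pos h3]

lemma sg_eval_of_roots_lt {p : ℝ[X]} (hp : p ≠ 0) {t : ℝ} (h : ∀ y ∈ p.roots, y < t) :
    sg (p.eval t) = einf p := by
  obtain ⟨T, hT⟩ := Filter.eventually_atTop.1 (eventually_sg_atTop p)
  have h1 : sg (p.eval (max T t)) = einf p := hT _ (le_max_left _ _)
  rw [← h1]
  refine no_sign_change (le_max_right _ _) fun c hc h0 => ?_
  exact absurd (h c ((mem_roots hp).2 h0)) (not_lt.2 hc.1)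

lemma comp_negX_facts (p : ℝ[X]) (hp : p ≠ 0) :
    (p.comp (-X) ≠ 0) ∧ (∀ z : ℝ, (p.comp (-X)).eval z = p.eval (-z)) ∧
      einf (p.comp (-X)) = minf p := by
  have hev : ∀ z : ℝ, (p.comp (-X)).eval z = p.eval (-z) := by
    intro z; rw [eval_comp]; simp
  have hlc : (p.comp (-X)).leadingCoeff = p.leadingCoeff * (-1) ^ p.natDegree := by
    rw [leadingCoeff_comp (by simp : ((-X : ℝ[X])).natDegree ≠ 0)]
    congr 1
    rw [leadingCoeff_neg, leadingCoeff_X]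
  have hne : p.comp (-X) ≠ 0 := by
    intro h0
    apply hp
    rw [← leadingCoeff_eq_zero] at h0 ⊢
    rw [hlc] at h0
    rcases mul_eq_zero.1 h0 with h1 | h1
    · exact h1
    · exact absurd h1 (by positivity)
  refine ⟨hne, hev, ?_⟩
  rw [einf, minf, hlc, sg_mul, sg_pow, sg_neg (by norm_num : (-1:ℝ) < 0)]
  ring

lemma sg_eval_of_lt_roots {p : ℝ[X]} (hp : p ≠ 0) {t : ℝ} (h : ∀ y ∈ p.roots, t < y) :
    sg (p.eval t) = minf p := by
  obtain ⟨hne, hev, heinf⟩ := comp_negX_facts p hp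
  have hroots : ∀ y ∈ (p.comp (-X)).roots, y < -t := by
    intro y hy
    have : p.eval (-y) = 0 := by rw [← hev]; exact (mem_roots hne).1 hy
    have := h (-y) ((mem_roots hp).2 this)
    linarith
  have := sg_eval_of_roots_lt hne hroots
  rw [hev, neg_neg] at this
  rw [this, heinf]

lemma hjmp_twist {q : ℝ[X]} (hq : q ≠ 0) {y₀ z : ℝ} (hz : z < y₀) (m : ℕ) :
    hjmp ((X - C y₀) ^ m * q) z = (-1) ^ m * hjmp q z := by
  have hp0 : (X - C y₀) ^ m * q ≠ 0 := mul_ne_zero (pow_ne_zero _ (X_sub_C_ne_zero _)) hq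
  have hfac : (X - C y₀) ^ m * q
      = (X - C z) ^ (rootMultiplicity z q) * ((X - C y₀) ^ m * red q z) := by
    conv_lhs => rw [← red_spec q z]
    ring
  have hev : ((X - C y₀) ^ m * red q z).eval z ≠ 0 := by
    simp only [eval_mul, eval_pow, eval_sub, eval_X, eval_C]
    exact mul_ne_zero (pow_ne_zero _ (sub_ne_zero.2 hz.ne)) (red_eval_ne hq z)
  obtain ⟨hm, hr⟩ := mult_red_unique hev hfac
  unfold hjmp
  rw [if_neg hp0, if_neg hq, hm, hr]
  rcases Nat.even_or_odd (rootMultiplicity z q) with he | ho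
  · rw [if_neg (Nat.not_odd_iff_even.2 he), if_neg (Nat.not_odd_iff_even.2 he), mul_zero]
  · rw [if_pos ho, if_pos ho]
    simp only [eval_mul, eval_pow, eval_sub, eval_X, eval_C]
    rw [sg_mul, sg_pow, sg_neg (by linarith : z - y₀ < 0)]

lemma walk (p : ℝ[X]) (hp : p ≠ 0) :
    2 * ∑ y ∈ p.roots.toFinset, hjmp p y = einf p - minf p := by
  generalize hd : p.natDegree = d
  induction d using Nat.strong_induction_on generalizing p with
  | _ d ih =>
  rcases Finset.eq_empty_or_nonempty p.roots.toFinset with hemp | hne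
  · rw [hemp, Finset.sum_empty, mul_zero]
    have hlt : ∀ y ∈ p.roots, y < (0:ℝ) := by
      intro y hy
      exact absurd (Multiset.mem_toFinset.2 hy) (by rw [hemp]; simp)
    have hgt : ∀ y ∈ p.roots, (0:ℝ) < y := by
      intro y hy
      exact absurd (Multiset.mem_toFinset.2 hy) (by rw [hemp]; simp)
    rw [← sg_eval_of_roots_lt hp hlt, ← sg_eval_of_lt_roots hp hgt, sub_self]
  · set y₀ := p.roots.toFinset.max' hne with hy₀def
    have hy₀root : p.IsRoot y₀ :=
      (mem_roots hp).1 (Multiset.mem_toFinset.1 (p.roots.toFinset.max'_mem hne))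
    set m := rootMultiplicity y₀ p with hmdef
    have hm1 : 1 ≤ m := (rootMultiplicity_pos hp).2 hy₀root
    set q := red p y₀ with hqdef
    have hfac : (X - C y₀) ^ m * q = p := red_spec p y₀
    have hq0 : q ≠ 0 := fun h => hp (by rw [← hfac, h, mul_zero])
    have hqy₀ : q.eval y₀ ≠ 0 := red_eval_ne hp y₀
    have hdeg : p.natDegree = m + q.natDegree := by
      rw [← hfac, natDegree_mul (pow_ne_zero _ (X_sub_C_ne_zero y₀)) hq0, natDegree_pow,
        natDegree_X_sub_C, mul_one]
    have hqsubp : ∀ z : ℝ, z ∈ q.roots → z ∈ p.roots := by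
      intro z hz
      rw [mem_roots hp]
      rw [IsRoot, ← hfac, eval_mul]
      rw [(mem_roots hq0).1 hz]
      ring
    have hqlt : ∀ z ∈ q.roots, z < y₀ := by
      intro z hz
      refine lt_of_le_of_ne (Finset.le_max' _ z (Multiset.mem_toFinset.2 (hqsubp z hz))) ?_
      intro h
      exact hqy₀ (h ▸ (mem_roots hq0).1 hz)
    have hrootsp : p.roots.toFinset = insert y₀ q.roots.toFinset := by
      ext z
      simp only [Multiset.mem_toFinset, Finset.mem_insert]
      constructor
      · intro hz
        rcases eq_or_ne z y₀ with rfl | hzy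
        · exact Or.inl rfl
        · right
          rw [mem_roots hq0]
          have h1 : (z - y₀) ^ m * q.eval z = 0 := by
            have := (mem_roots hp).1 hz
            rw [IsRoot, ← hfac, eval_mul, eval_pow, eval_sub, eval_X, eval_C] at this
            exact this
          have h2 : (z - y₀) ^ m ≠ 0 := pow_ne_zero _ (sub_ne_zero.2 hzy)
          exact (mul_eq_zero.1 h1).resolve_left h2
      · rintro (rfl | hz)
        · exact Multiset.mem_toFinset.1 (p.roots.toFinset.max'_mem hne)
        · exact hqsubp z hz
    have hy₀notq : y₀ ∉ q.roots.toFinset := by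
      rw [Multiset.mem_toFinset, mem_roots hq0]
      exact hqy₀
    have hIH : 2 * ∑ z ∈ q.roots.toFinset, hjmp q z = einf q - minf q := by
      refine ih q.natDegree (by omega) q hq0 rfl
    have hsum : ∑ z ∈ q.roots.toFinset, hjmp p z
        = (-1) ^ m * ∑ z ∈ q.roots.toFinset, hjmp q z := by
      rw [Finset.mul_sum]
      refine Finset.sum_congr rfl fun z hz => ?_
      rw [← hfac]
      exact hjmp_twist hq0 (hqlt z (Multiset.mem_toFinset.1 hz)) m
    have hhead : hjmp p y₀ = if Odd m then einf q else 0 := by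
      unfold hjmp
      rw [if_neg hp, ← hmdef, ← hqdef, sg_eval_of_roots_lt hq0 hqlt]
    have heinf : einf p = einf q := by
      rw [einf, einf, ← hfac, leadingCoeff_mul, Monic.leadingCoeff ((monic_X_sub_C y₀).pow m),
        one_mul]
    have hminf : minf p = (-1) ^ m * minf q := by
      have hlc : p.leadingCoeff = q.leadingCoeff := by
        rw [← hfac, leadingCoeff_mul, Monic.leadingCoeff ((monic_X_sub_C y₀).pow m), one_mul]
      rw [minf, minf, hdeg, pow_add, hlc]
      ring
    rw [hrootsp, Finset.sum_insert hy₀notq, hhead, heinf, hminf, hsum]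
    rcases Nat.even_or_odd m with he | ho
    · rw [if_neg (Nat.not_odd_iff_even.2 he), he.neg_one_pow]
      linarith [hIH]
    · rw [if_pos ho, ho.neg_one_pow]
      linarith [hIH]

/-- Cauchy index of `h/f` over all of `ℝ`. -/
noncomputable def Ind (f h : ℝ[X]) : ℤ := ∑ y ∈ f.roots.toFinset, jmp f h y

lemma Ind_zero_left (h : ℝ[X]) : Ind 0 h = 0 := by
  refine Finset.sum_eq_zero fun y _ => ?_
  unfold jmp; simp

lemma Ind_zero_right (f : ℝ[X]) : Ind f 0 = 0 := by
  unfold Ind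
  refine Finset.sum_eq_zero fun y _ => ?_
  unfold jmp; simp

lemma Ind_const (c : ℝ) (h : ℝ[X]) : Ind (C c) h = 0 := by
  unfold Ind
  rw [show (C c : ℝ[X]).roots = 0 from roots_C c]
  simp

lemma Ind_sum_superset {f h : ℝ[X]} (hf : f ≠ 0) {S : Finset ℝ}
    (hS : f.roots.toFinset ⊆ S) : Ind f h = ∑ y ∈ S, jmp f h y := by
  refine Finset.sum_subset hS fun y _ hy => ?_
  exact jmp_eq_zero_of_not_root fun hr => hy (Multiset.mem_toFinset.2 ((mem_roots hf).2 hr))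

lemma Ind_inversion {f h : ℝ[X]} (hf : f ≠ 0) (hh : h ≠ 0) :
    2 * (Ind f h + Ind h f) = einf (f * h) - minf (f * h) := by
  have hfh : f * h ≠ 0 := mul_ne_zero hf hh
  have hsub1 : f.roots.toFinset ⊆ (f * h).roots.toFinset := by
    intro y hy
    rw [Multiset.mem_toFinset, mem_roots hfh]
    have := (mem_roots hf).1 (Multiset.mem_toFinset.1 hy)
    rw [IsRoot, eval_mul, this, zero_mul]
  have hsub2 : h.roots.toFinset ⊆ (f * h).roots.toFinset := by
    intro y hy
    rw [Multiset.mem_toFinset, mem_roots hfh]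
    have := (mem_roots hh).1 (Multiset.mem_toFinset.1 hy)
    rw [IsRoot, eval_mul, this, mul_zero]
  rw [Ind_sum_superset hf hsub1, Ind_sum_superset hh hsub2, ← Finset.sum_add_distrib]
  rw [Finset.sum_congr rfl fun y _ => jmp_add_jmp hf hh y]
  exact walk _ hfh

lemma Ind_translate {f : ℝ[X]} (hf : f ≠ 0) (q r : ℝ[X]) :
    Ind f (q * f + r) = Ind f r :=
  Finset.sum_congr rfl fun y _ => jmp_translate hf y

lemma Ind_sq_smul {c : ℝ} (hc : c ≠ 0) (f h : ℝ[X]) :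
    Ind f (C c ^ 2 * h) = Ind f h :=
  Finset.sum_congr rfl fun y _ => jmp_sq_smul hc y

/-- Tarski query: the sum of signs of `g` over the real roots of `f`. -/
noncomputable def TaQ (g f : ℝ[X]) : ℤ := ∑ y ∈ f.roots.toFinset, sg (g.eval y)

lemma TaQ_eq_Ind {f : ℝ[X]} (hf : f ≠ 0) (g : ℝ[X]) :
    TaQ g f = Ind f (derivative f * g) :=
  Finset.sum_congr rfl fun y hy =>
    (jmp_deriv hf ((mem_roots hf).1 (Multiset.mem_toFinset.1 hy))).symm

end TSJ
/-! ### Pseudo-division -/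
namespace TSJ
open Polynomial

lemma pseudoDiv_aux {A : Type*} [CommRing A] (g : A[X]) (hg : 0 < g.natDegree) :
    ∀ N : ℕ, ∀ f : A[X], f.natDegree ≤ N →
      ∃ (k : ℕ) (q r : A[X]), (C g.leadingCoeff) ^ k * f = q * g + r ∧
        r.natDegree < g.natDegree := by
  intro N
  induction N using Nat.strong_induction_on with
  | _ N ih =>
  intro f hf
  rcases lt_or_ge f.natDegree g.natDegree with hlt | hge
  · exact ⟨0, 0, f, by simp, hlt⟩
  · have hN : 1 ≤ N := le_trans (le_trans hg hge) hf
    set d := f.natDegree with hd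
    set e := g.natDegree with he
    set f' := C g.leadingCoeff * f - C f.leadingCoeff * X ^ (d - e) * g with hf'
    have hdeg' : f'.natDegree < d ∨ f' = 0 := by
      have hb1 : (C g.leadingCoeff * f).natDegree ≤ d :=
        le_trans (natDegree_mul_le) (by simp [hd])
      have hb2 : (C f.leadingCoeff * X ^ (d - e) * g).natDegree ≤ d := by
        refine le_trans natDegree_mul_le ?_
        have hX : (X ^ (d - e) : A[X]).natDegree ≤ d - e := (natDegree_X_pow_le _)
        have : (C f.leadingCoeff * X ^ (d - e)).natDegree ≤ d - e :=
          le_trans natDegree_mul_le (by simpa using hX)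
        omega
      have hdle : f'.natDegree ≤ d :=
        le_trans (natDegree_sub_le _ _) (by omega)
      have hcoeff : f'.coeff d = 0 := by
        have hre : C f.leadingCoeff * X ^ (d - e) * g = (C f.leadingCoeff * g) * X ^ (d - e) := by
          ring
        rw [hf', coeff_sub, coeff_C_mul, hre, coeff_mul_X_pow', if_pos (by omega), coeff_C_mul]
        have h1 : f.coeff d = f.leadingCoeff := rfl
        have h2 : g.coeff (d - (d - e)) = g.leadingCoeff := by
          congr 1
          omega
        rw [h1, h2]
        ring
      rcases eq_or_ne f' 0 with h0 | h0
      · exact Or.inr h0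
      · left
        rcases lt_or_eq_of_le hdle with h | h
        · exact h
        · exfalso
          apply h0
          rw [← leadingCoeff_eq_zero, leadingCoeff, h, hcoeff]
    have hstep : C g.leadingCoeff * f = C f.leadingCoeff * X ^ (d - e) * g + f' := by
      rw [hf']; ring
    rcases hdeg' with hdeg' | hzero
    · obtain ⟨k, q, r, heq, hr⟩ := ih (N - 1) (by omega) f' (by omega)
      refine ⟨k + 1, q + C g.leadingCoeff ^ k * (C f.leadingCoeff * X ^ (d - e)), r, ?_, hr⟩
      have : C g.leadingCoeff ^ (k + 1) * f = C g.leadingCoeff ^ k * (C g.leadingCoeff * f) := by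
        ring
      rw [this, hstep, mul_add, heq]
      ring
    · refine ⟨1, C f.leadingCoeff * X ^ (d - e), 0, ?_, by simpa using hg⟩
      rw [pow_one, hstep, hzero]

lemma pseudoDiv {A : Type*} [CommRing A] (g : A[X]) (hg : 0 < g.natDegree) (f : A[X]) :
    ∃ (k : ℕ) (q r : A[X]), (C g.leadingCoeff) ^ (2 * k) * f = q * g + r ∧
      r.natDegree < g.natDegree := by
  obtain ⟨k, q, r, heq, hr⟩ := pseudoDiv_aux g hg f.natDegree f le_rfl
  rcases Nat.even_or_odd k with ⟨m, hm⟩ | ⟨m, hm⟩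
  · exact ⟨m, q, r, by rw [← heq]; congr 1; congr 1; omega, hr⟩
  · refine ⟨m + 1, C g.leadingCoeff * q, C g.leadingCoeff * r, ?_, ?_⟩
    · have h2 : (2 * (m + 1)) = k + 1 := by omega
      rw [h2, pow_succ, mul_comm (C g.leadingCoeff ^ k) (C g.leadingCoeff), mul_assoc, heq]
      ring
    · refine lt_of_le_of_lt (le_trans natDegree_mul_le ?_) hr
      simp

end TSJ
/-! ### Parametric semialgebraicity of Cauchy index level sets -/

namespace TSP
open Polynomial

variable {n : ℕ}

/-- Specialization of a polynomial with `MvPolynomial` coefficients at a parameter point. -/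
noncomputable def sp (x : Fin n → ℝ) (F : (MvP n)[X]) : ℝ[X] :=
  F.map (MvPolynomial.eval x)

lemma sp_facts {x : Fin n → ℝ} {F : (MvP n)[X]}
    (hlc : MvPolynomial.eval x F.leadingCoeff ≠ 0) :
    sp x F ≠ 0 ∧ (sp x F).natDegree = F.natDegree ∧
      (sp x F).leadingCoeff = MvPolynomial.eval x F.leadingCoeff := by
  have h2 := natDegree_map_of_leadingCoeff_ne_zero (MvPolynomial.eval x) hlc
  have h3 := leadingCoeff_map_of_leadingCoeff_ne_zero (MvPolynomial.eval x) hlc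
  exact ⟨fun h0 => hlc (by rw [← h3]; unfold sp at h0; rw [h0, leadingCoeff_zero]), h2, h3⟩

lemma sp_eraseLead_eq {x : Fin n → ℝ} {F : (MvP n)[X]}
    (hlc : MvPolynomial.eval x F.leadingCoeff = 0) :
    sp x F.eraseLead = sp x F := by
  have h := eraseLead_add_C_mul_X_pow F
  have h2 := congrArg (Polynomial.map (MvPolynomial.eval x)) h
  rw [Polynomial.map_add, Polynomial.map_mul, Polynomial.map_C, Polynomial.map_pow,
    Polynomial.map_X, hlc, map_zero, zero_mul, add_zero] at h2
  exact h2

lemma SA_inter_congr {T S piece : Set (Fin n → ℝ)} (hS : IsSemialgebraic' S)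
    (hpiece : IsSemialgebraic' piece) (h : ∀ x ∈ piece, x ∈ T ↔ x ∈ S) :
    IsSemialgebraic' (T ∩ piece) := by
  have : T ∩ piece = S ∩ piece := by
    ext x
    exact ⟨fun ⟨h1, h2⟩ => ⟨(h x h2).1 h1, h2⟩, fun ⟨h1, h2⟩ => ⟨(h x h2).2 h1, h2⟩⟩
  rw [this]
  exact hS.inter hpiece

lemma SA_inter_congr2 {T0 S0 P1 P2 : Set (Fin n → ℝ)} (hS : IsSemialgebraic' S0)
    (hP1 : IsSemialgebraic' P1) (hP2 : IsSemialgebraic' P2)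
    (h : ∀ x, x ∈ P1 → x ∈ P2 → (x ∈ T0 ↔ x ∈ S0)) :
    IsSemialgebraic' ((T0 ∩ P1) ∩ P2) := by
  have heq : (T0 ∩ P1) ∩ P2 = (S0 ∩ P1) ∩ P2 := by
    ext x
    constructor
    · rintro ⟨⟨h1, h2⟩, h3⟩
      exact ⟨⟨(h x h2 h3).1 h1, h2⟩, h3⟩
    · rintro ⟨⟨h1, h2⟩, h3⟩
      exact ⟨⟨(h x h2 h3).2 h1, h2⟩, h3⟩
  rw [heq]
  exact (hS.inter hP1).inter hP2

lemma SA_const (P : Prop) : IsSemialgebraic' {x : Fin n → ℝ | P} := by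
  by_cases h : P
  · have : {x : Fin n → ℝ | P} = Set.univ := by ext x; simp [h]
    rw [this]; exact IsBasicSemialgebraic'.isSemialgebraic isBasicSemialgebraic_univ
  · have : {x : Fin n → ℝ | P} = ∅ := by ext x; simp [h]
    rw [this]; exact isSemialgebraic_empty

lemma piece_split (T : Set (Fin n → ℝ)) (p : MvP n)
    (h : ∀ s : ℤ, IsSemialgebraic' (T ∩ {x | sg (MvPolynomial.eval x p) = s})) :
    IsSemialgebraic' T := by
  have hT : T = (T ∩ {x | sg (MvPolynomial.eval x p) = 0}) ∪
      ((T ∩ {x | sg (MvPolynomial.eval x p) = 1}) ∪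
        (T ∩ {x | sg (MvPolynomial.eval x p) = -1})) := by
    ext x
    simp only [Set.mem_union, Set.mem_inter_iff, Set.mem_setOf_eq]
    constructor
    · intro hx
      rcases sg_mem (r := MvPolynomial.eval x p) with h' | h' | h'
      · exact Or.inl ⟨hx, h'⟩
      · exact Or.inr (Or.inl ⟨hx, h'⟩)
      · exact Or.inr (Or.inr ⟨hx, h'⟩)
    · rintro (⟨hx, -⟩ | ⟨hx, -⟩ | ⟨hx, -⟩) <;> exact hx
  rw [hT]
  exact (h 0).union ((h 1).union (h (-1)))

theorem SA_Ind (N : ℕ) :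
    ∀ (F G : (MvP n)[X]), F.natDegree + G.natDegree ≤ N → ∀ c : ℤ,
      IsSemialgebraic' {x : Fin n → ℝ | TSJ.Ind (sp x F) (sp x G) = c} := by
  induction N using Nat.strong_induction_on with
  | _ N ih =>
  intro F G hN c
  rcases eq_or_ne F 0 with rfl | hF0
  · have he : {x : Fin n → ℝ | TSJ.Ind (sp x 0) (sp x G) = c} = {x | (0:ℤ) = c} := by
      ext x
      simp only [Set.mem_setOf_eq]
      rw [show sp x 0 = 0 from Polynomial.map_zero _, TSJ.Ind_zero_left]
    rw [he]; exact SA_const _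
  apply piece_split _ F.leadingCoeff
  intro s
  set P1 := {x : Fin n → ℝ | sg (MvPolynomial.eval x F.leadingCoeff) = s} with hP1
  have hP1SA : IsSemialgebraic' P1 := isSemialgebraic_sgn _ _
  rcases eq_or_ne s 0 with rfl | hs0
  · -- leading coefficient of F vanishes
    rcases Nat.eq_zero_or_pos F.natDegree with hd0 | hdpos
    · -- F is a nonzero constant, vanishing on the piece: sp x F = 0
      refine SA_inter_congr (SA_const ((0:ℤ) = c)) hP1SA fun x hx => ?_
      simp only [Set.mem_setOf_eq] at hx ⊢
      have hev : MvPolynomial.eval x F.leadingCoeff = 0 := sg_eq_zero_iff.1 hx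
      have hFC : F = Polynomial.C (F.coeff 0) := eq_C_of_natDegree_eq_zero hd0
      have hsp : sp x F = 0 := by
        rw [hFC]
        unfold sp
        rw [Polynomial.map_C]
        have : F.leadingCoeff = F.coeff 0 := by rw [leadingCoeff, hd0]
        rw [← this, hev, map_zero]
      rw [hsp, TSJ.Ind_zero_left]
    · -- drop the leading coefficient
      have hM : F.eraseLead.natDegree + G.natDegree < N := by
        have := eraseLead_natDegree_le F
        omega
      refine SA_inter_congr (ih _ hM F.eraseLead G le_rfl c) hP1SA fun x hx => ?_
      simp only [Set.mem_setOf_eq] at hx ⊢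
      rw [sp_eraseLead_eq (sg_eq_zero_iff.1 hx)]
  · -- honest leading coefficient for F, sign s ≠ 0
    have hlcP1 : ∀ x ∈ P1, MvPolynomial.eval x F.leadingCoeff ≠ 0 := by
      intro x hx h0
      rw [Set.mem_setOf_eq] at hx
      rw [h0, sg_zero] at hx
      exact hs0 hx.symm
    rcases Nat.eq_zero_or_pos F.natDegree with hd0 | hdpos
    · -- F specializes to a nonzero constant
      refine SA_inter_congr (SA_const ((0:ℤ) = c)) hP1SA fun x hx => ?_
      simp only [Set.mem_setOf_eq] at hx ⊢
      have hFC : F = Polynomial.C (F.coeff 0) := eq_C_of_natDegree_eq_zero hd0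
      have hsp : sp x F = Polynomial.C (MvPolynomial.eval x (F.coeff 0)) := by
        conv_lhs => rw [hFC]
        unfold sp; rw [Polynomial.map_C]
      rw [hsp, TSJ.Ind_const]
    rcases le_or_gt F.natDegree G.natDegree with hFG | hGF
    · -- reduce G mod F
      obtain ⟨k, q, r, heq, hr⟩ := TSJ.pseudoDiv F hdpos G
      have hM : F.natDegree + r.natDegree < N := by omega
      refine SA_inter_congr (ih _ hM F r (le_refl _) c) hP1SA fun x hx => ?_
      simp only [Set.mem_setOf_eq] at hx ⊢
      have hlc := hlcP1 x hx
      obtain ⟨hsp0, hspd, hsplc⟩ := sp_facts hlc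
      set e0 := MvPolynomial.eval x F.leadingCoeff with he0
      have h2 := congrArg (Polynomial.map (MvPolynomial.eval x)) heq
      rw [Polynomial.map_add, Polynomial.map_mul, Polynomial.map_mul, Polynomial.map_pow,
        Polynomial.map_C] at h2
      have hspEq : Polynomial.C (e0 ^ k) ^ 2 * sp x G = sp x q * sp x F + sp x r := by
        unfold sp
        rw [Polynomial.C_pow, ← pow_mul, mul_comm k 2]
        exact h2
      have step1 : TSJ.Ind (sp x F) (sp x G)
          = TSJ.Ind (sp x F) (Polynomial.C (e0 ^ k) ^ 2 * sp x G) :=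
        (TSJ.Ind_sq_smul (pow_ne_zero k hlc) _ _).symm
      rw [step1, hspEq, TSJ.Ind_translate hsp0]
    · -- G has smaller degree: use inversion; split on G's leading coefficient
      rcases eq_or_ne G 0 with rfl | hG0
      · refine SA_inter_congr (SA_const ((0:ℤ) = c)) hP1SA fun x hx => ?_
        simp only [Set.mem_setOf_eq] at hx ⊢
        rw [show sp x 0 = 0 from Polynomial.map_zero _, TSJ.Ind_zero_right]
      apply piece_split _ G.leadingCoeff
      intro s'
      set P2 := {x : Fin n → ℝ | sg (MvPolynomial.eval x G.leadingCoeff) = s'} with hP2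
      have hP2SA : IsSemialgebraic' P2 := isSemialgebraic_sgn _ _
      rcases eq_or_ne s' 0 with rfl | hs'0
      · -- G's leading coefficient vanishes on the piece
        rcases Nat.eq_zero_or_pos G.natDegree with hgd0 | hgdpos
        · refine SA_inter_congr2 (SA_const ((0:ℤ) = c)) hP1SA hP2SA fun x _ hx2 => ?_
          simp only [Set.mem_setOf_eq] at hx2 ⊢
          have hev : MvPolynomial.eval x G.leadingCoeff = 0 := sg_eq_zero_iff.1 hx2
          have hGC : G = Polynomial.C (G.coeff 0) := eq_C_of_natDegree_eq_zero hgd0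
          have hsp : sp x G = 0 := by
            rw [hGC]; unfold sp; rw [Polynomial.map_C]
            have hl : G.leadingCoeff = G.coeff 0 := by rw [leadingCoeff, hgd0]
            rw [← hl, hev, map_zero]
          rw [hsp, TSJ.Ind_zero_right]
        · have hM : F.natDegree + G.eraseLead.natDegree < N := by
            have := eraseLead_natDegree_le G
            omega
          refine SA_inter_congr2 (ih _ hM F G.eraseLead le_rfl c) hP1SA hP2SA
            fun x _ hx2 => ?_
          simp only [Set.mem_setOf_eq] at hx2 ⊢
          rw [sp_eraseLead_eq (sg_eq_zero_iff.1 hx2)]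
      · -- both leading coefficients honest: inversion
        set B : ℤ := if Even (F.natDegree + G.natDegree) then 0 else s * s' with hB
        have hlcP2 : ∀ x ∈ P2, MvPolynomial.eval x G.leadingCoeff ≠ 0 := by
          intro x hx h0
          rw [Set.mem_setOf_eq] at hx
          rw [h0, sg_zero] at hx
          exact hs'0 hx.symm
        have key : ∀ x, x ∈ P1 → x ∈ P2 →
            ∀ d : ℤ, TSJ.Ind (sp x F) (sp x G) = d ↔
              TSJ.Ind (sp x G) (sp x F) = B - d := by
          intro x hx1 hx2 d
          have hlc1 := hlcP1 x hx1
          have hlc2 := hlcP2 x hx2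
          obtain ⟨hsp1, hd1, hl1⟩ := sp_facts hlc1
          obtain ⟨hsp2, hd2, hl2⟩ := sp_facts hlc2
          have hinv := TSJ.Ind_inversion hsp1 hsp2
          have heinf : TSJ.einf (sp x F * sp x G) = s * s' := by
            rw [TSJ.einf, leadingCoeff_mul, sg_mul, hl1, hl2]
            rw [Set.mem_setOf_eq] at hx1 hx2
            rw [hx1, hx2]
          have hminf : TSJ.minf (sp x F * sp x G) = (-1) ^ (F.natDegree + G.natDegree) * (s * s') := by
            rw [TSJ.minf, natDegree_mul hsp1 hsp2, hd1, hd2, leadingCoeff_mul, sg_mul, hl1, hl2]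
            rw [Set.mem_setOf_eq] at hx1 hx2
            rw [hx1, hx2]
          rw [heinf, hminf] at hinv
          have hsum : TSJ.Ind (sp x F) (sp x G) + TSJ.Ind (sp x G) (sp x F) = B := by
            rcases Nat.even_or_odd (F.natDegree + G.natDegree) with he | ho
            · rw [hB, if_pos he]
              rw [he.neg_one_pow] at hinv
              omega
            · rw [hB, if_neg (Nat.not_even_iff_odd.2 ho)]
              rw [ho.neg_one_pow] at hinv
              omega
          omega
        rcases Nat.eq_zero_or_pos G.natDegree with hgd0 | hgdpos
        · -- G specializes to a nonzero constant: Ind (sp G) (sp F) = 0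
          refine SA_inter_congr2 (SA_const (B - c = 0)) hP1SA hP2SA fun x hx1 hx2 => ?_
          simp only [Set.mem_setOf_eq]
          rw [key x hx1 hx2 c]
          have hGC : G = Polynomial.C (G.coeff 0) := eq_C_of_natDegree_eq_zero hgd0
          have hsp : sp x G = Polynomial.C (MvPolynomial.eval x (G.coeff 0)) := by
            conv_lhs => rw [hGC]
            unfold sp; rw [Polynomial.map_C]
          rw [hsp, TSJ.Ind_const]
          omega
        · -- reduce F mod G
          obtain ⟨k, q, r, heq, hr⟩ := TSJ.pseudoDiv G hgdpos F
          have hM : G.natDegree + r.natDegree < N := by omega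
          refine SA_inter_congr2 (ih _ hM G r le_rfl (B - c)) hP1SA hP2SA fun x hx1 hx2 => ?_
          simp only [Set.mem_setOf_eq]
          rw [key x hx1 hx2 c]
          have hlc2 := hlcP2 x hx2
          obtain ⟨hsp2, hd2, hl2⟩ := sp_facts hlc2
          set e1 := MvPolynomial.eval x G.leadingCoeff with he1
          have h2 := congrArg (Polynomial.map (MvPolynomial.eval x)) heq
          rw [Polynomial.map_add, Polynomial.map_mul, Polynomial.map_mul, Polynomial.map_pow,
            Polynomial.map_C] at h2
          have hspEq : Polynomial.C (e1 ^ k) ^ 2 * sp x F = sp x q * sp x G + sp x r := by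
            unfold sp
            rw [Polynomial.C_pow, ← pow_mul, mul_comm k 2]
            exact h2
          have step1 : TSJ.Ind (sp x G) (sp x F)
              = TSJ.Ind (sp x G) (Polynomial.C (e1 ^ k) ^ 2 * sp x F) :=
            (TSJ.Ind_sq_smul (pow_ne_zero k hlc2) _ _).symm
          rw [step1, hspEq, TSJ.Ind_translate hsp2]

end TSP
/-! ### Tarski queries, parametric -/
namespace TSP
open Polynomial

variable {n : ℕ}

lemma TaQ_zero (g : ℝ[X]) : TSJ.TaQ g 0 = 0 := by
  unfold TSJ.TaQ
  rw [show (0 : ℝ[X]).roots = 0 from roots_zero]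
  simp

lemma SA_TaQ : ∀ (N : ℕ) (F H : (MvP n)[X]), F.natDegree ≤ N → ∀ t : ℤ,
    IsSemialgebraic' {x : Fin n → ℝ | TSJ.TaQ (sp x H) (sp x F) = t} := by
  intro N
  induction N using Nat.strong_induction_on with
  | _ N ih =>
  intro F H hN t
  rcases eq_or_ne F 0 with rfl | hF0
  · have he : {x : Fin n → ℝ | TSJ.TaQ (sp x H) (sp x 0) = t} = {x | (0:ℤ) = t} := by
      ext x
      simp only [Set.mem_setOf_eq]
      rw [show sp x 0 = 0 from Polynomial.map_zero _, TaQ_zero]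
    rw [he]; exact SA_const _
  apply piece_split _ F.leadingCoeff
  intro s
  have hPSA : IsSemialgebraic' {x : Fin n → ℝ | sg (MvPolynomial.eval x F.leadingCoeff) = s} :=
    isSemialgebraic_sgn _ _
  rcases eq_or_ne s 0 with rfl | hs0
  · rcases Nat.eq_zero_or_pos F.natDegree with hd0 | hdpos
    · refine SA_inter_congr (SA_const ((0:ℤ) = t)) hPSA fun x hx => ?_
      simp only [Set.mem_setOf_eq] at hx ⊢
      have hev : MvPolynomial.eval x F.leadingCoeff = 0 := sg_eq_zero_iff.1 hx
      have hFC : F = Polynomial.C (F.coeff 0) := eq_C_of_natDegree_eq_zero hd0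
      have hsp : sp x F = 0 := by
        conv_lhs => rw [hFC]
        unfold sp
        rw [Polynomial.map_C]
        have hl : F.leadingCoeff = F.coeff 0 := by rw [leadingCoeff, hd0]
        rw [← hl, hev, map_zero]
      rw [hsp, TaQ_zero]
    · have hM : F.eraseLead.natDegree < N := by
        have := eraseLead_natDegree_le F
        omega
      refine SA_inter_congr (ih _ hM F.eraseLead H le_rfl t) hPSA fun x hx => ?_
      simp only [Set.mem_setOf_eq] at hx ⊢
      rw [sp_eraseLead_eq (sg_eq_zero_iff.1 hx)]
  · refine SA_inter_congr (SA_Ind (F.natDegree + (derivative F * H).natDegree) F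
      (derivative F * H) le_rfl t) hPSA fun x hx => ?_
    simp only [Set.mem_setOf_eq] at hx ⊢
    have hlc : MvPolynomial.eval x F.leadingCoeff ≠ 0 := by
      intro h0
      rw [h0, sg_zero] at hx
      exact hs0 hx.symm
    obtain ⟨hsp0, -, -⟩ := sp_facts hlc
    rw [TSJ.TaQ_eq_Ind hsp0]
    have : sp x (derivative F * H) = derivative (sp x F) * sp x H := by
      unfold sp
      rw [Polynomial.map_mul, derivative_map]
    rw [this]

/-! ### Root counting with sign conditions -/

/-- Coefficients expressing the indicator of sign `σ` as a quadratic in the sign. -/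
noncomputable def coef (σ : ℤ) (j : Fin 3) : ℚ :=
  if σ = 0 then (![1, 0, -1] : Fin 3 → ℚ) j
  else if σ = 1 then (![0, 1/2, 1/2] : Fin 3 → ℚ) j
  else if σ = -1 then (![0, -1/2, 1/2] : Fin 3 → ℚ) j
  else 0

lemma coef_spec (σ s : ℤ) (hs : s = 0 ∨ s = 1 ∨ s = -1) :
    ∑ j : Fin 3, coef σ j * (s : ℚ) ^ (j : ℕ) = if s = σ then 1 else 0 := by
  rw [Fin.sum_univ_three]
  rcases eq_or_ne σ 0 with rfl | h0
  · rcases hs with rfl | rfl | rfl <;> norm_num [coef, Matrix.cons_val_two, Matrix.vecHead, Matrix.vecTail]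
  rcases eq_or_ne σ 1 with rfl | h1
  · rcases hs with rfl | rfl | rfl <;> norm_num [coef, Matrix.cons_val_two, Matrix.vecHead, Matrix.vecTail]
  rcases eq_or_ne σ (-1) with rfl | hm
  · rcases hs with rfl | rfl | rfl <;> norm_num [coef, Matrix.cons_val_two, Matrix.vecHead, Matrix.vecTail]
  · rcases hs with rfl | rfl | rfl <;> simp [coef, h0, h1, hm, Ne.symm h0, Ne.symm h1, Ne.symm hm]

lemma sg_prod {ι : Type*} (s : Finset ι) (f : ι → ℝ) :
    sg (∏ i ∈ s, f i) = ∏ i ∈ s, sg (f i) := by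
  classical
  induction s using Finset.induction with
  | empty => simp [sg_pos, zero_lt_one]
  | @insert a s' ha ih => rw [Finset.prod_insert ha, Finset.prod_insert ha, sg_mul, ih]

/-- The number of roots of `sp x F` satisfying the sign conditions `σ` on `G`. -/
noncomputable def cnt (F : (MvP n)[X]) {k : ℕ} (G : Fin k → (MvP n)[X]) (σ : Fin k → ℤ)
    (x : Fin n → ℝ) : ℕ :=
  ((sp x F).roots.toFinset.filter
    (fun y => ∀ i, sg ((sp x (G i)).eval y) = σ i)).card

lemma sp_prod_pow (x : Fin n → ℝ) {k : ℕ} (G : Fin k → (MvP n)[X]) (α : Fin k → Fin 3) :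
    sp x (∏ i, G i ^ (α i : ℕ)) = ∏ i, (sp x (G i)) ^ (α i : ℕ) := by
  unfold sp
  rw [← Polynomial.coe_mapRingHom, map_prod]
  exact Finset.prod_congr rfl fun i _ => by rw [map_pow]

lemma cnt_eq_sum_TaQ (F : (MvP n)[X]) {k : ℕ} (G : Fin k → (MvP n)[X]) (σ : Fin k → ℤ)
    (x : Fin n → ℝ) :
    (cnt F G σ x : ℚ) = ∑ α : Fin k → Fin 3,
      (∏ i, coef (σ i) (α i)) *
        (TSJ.TaQ (sp x (∏ i, G i ^ (α i : ℕ))) (sp x F) : ℚ) := by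
  classical
  have hstep1 : ∀ y : ℝ, (if (∀ i, sg ((sp x (G i)).eval y) = σ i) then (1:ℚ) else 0)
      = ∏ i, (if sg ((sp x (G i)).eval y) = σ i then (1:ℚ) else 0) := by
    intro y
    by_cases hall : ∀ i, sg ((sp x (G i)).eval y) = σ i
    · rw [if_pos hall, Finset.prod_congr rfl fun i _ => if_pos (hall i),
        Finset.prod_const_one]
    · push_neg at hall
      obtain ⟨i0, hi0⟩ := hall
      rw [if_neg (by push_neg; exact ⟨i0, hi0⟩)]
      refine (Finset.prod_eq_zero (Finset.mem_univ i0) ?_).symm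
      rw [if_neg hi0]
  have hstep2 : ∀ (y : ℝ) (i : Fin k), (if sg ((sp x (G i)).eval y) = σ i then (1:ℚ) else 0)
      = ∑ j : Fin 3, coef (σ i) j * (sg ((sp x (G i)).eval y) : ℚ) ^ (j : ℕ) := by
    intro y i
    rw [coef_spec _ _ (by simpa using sg_mem (r := (sp x (G i)).eval y))]
  have hmain : ∀ y : ℝ, (if (∀ i, sg ((sp x (G i)).eval y) = σ i) then (1:ℚ) else 0)
      = ∑ α : Fin k → Fin 3, (∏ i, coef (σ i) (α i)) *
          ((sg ((sp x (∏ i, G i ^ (α i : ℕ))).eval y)) : ℚ) := by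
    intro y
    rw [hstep1 y, Finset.prod_congr rfl fun i _ => hstep2 y i, Finset.prod_univ_sum,
      Fintype.piFinset_univ]
    refine Finset.sum_congr rfl fun α _ => ?_
    rw [Finset.prod_mul_distrib]
    congr 1
    rw [sp_prod_pow, eval_prod, sg_prod]
    push_cast
    refine Finset.prod_congr rfl fun i _ => ?_
    rw [eval_pow, sg_pow]
    push_cast
    ring
  unfold cnt
  rw [Finset.card_filter]
  push_cast
  rw [Finset.sum_congr rfl fun y _ => hmain y, Finset.sum_comm]
  refine Finset.sum_congr rfl fun α _ => ?_
  rw [← Finset.mul_sum]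
  congr 1
  rw [TSJ.TaQ]
  push_cast
  rfl

lemma TaQ_abs_le (g f : ℝ[X]) : |TSJ.TaQ g f| ≤ (f.roots.toFinset.card : ℤ) := by
  refine le_trans (Finset.abs_sum_le_sum_abs _ _) ?_
  have : ∀ y ∈ f.roots.toFinset, |sg (g.eval y)| ≤ 1 := by
    intro y _
    rcases sg_mem (r := g.eval y) with h | h | h <;> rw [h] <;> norm_num
  calc ∑ y ∈ f.roots.toFinset, |sg (g.eval y)| ≤ ∑ y ∈ f.roots.toFinset, 1 :=
        Finset.sum_le_sum this
    _ = (f.roots.toFinset.card : ℤ) := by simp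

lemma TaQ_sp_abs_le (F H : (MvP n)[X]) (x : Fin n → ℝ) :
    |TSJ.TaQ (sp x H) (sp x F)| ≤ (F.natDegree : ℤ) := by
  refine le_trans (TaQ_abs_le _ _) ?_
  have h1 : (sp x F).roots.toFinset.card ≤ Multiset.card (sp x F).roots :=
    Multiset.toFinset_card_le _
  have h2 : Multiset.card (sp x F).roots ≤ (sp x F).natDegree := Polynomial.card_roots' _
  have h3 : (sp x F).natDegree ≤ F.natDegree := natDegree_map_le
  exact_mod_cast le_trans h1 (le_trans h2 h3)

/-- The set of parameters where at least `1` root of `sp x F` satisfies the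
sign conditions is semialgebraic. -/
lemma SA_cnt_pos (F : (MvP n)[X]) {k : ℕ} (G : Fin k → (MvP n)[X]) (σ : Fin k → ℤ) :
    IsSemialgebraic' {x : Fin n → ℝ | 1 ≤ cnt F G σ x} := by
  classical
  set D : ℤ := (F.natDegree : ℤ) with hD
  set V : Finset ((Fin k → Fin 3) → ℤ) :=
    (Fintype.piFinset fun _ => Finset.Icc (-D) D).filter
      (fun v => 1 ≤ ∑ α : Fin k → Fin 3, (∏ i, coef (σ i) (α i)) * (v α : ℚ)) with hV
  have hset : {x : Fin n → ℝ | 1 ≤ cnt F G σ x}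
      = ⋃ v ∈ V, ⋂ α : Fin k → Fin 3,
          {x | TSJ.TaQ (sp x (∏ i, G i ^ (α i : ℕ))) (sp x F) = v α} := by
    ext x
    simp only [Set.mem_setOf_eq, Set.mem_iUnion, Set.mem_iInter, exists_prop]
    constructor
    · intro hx
      refine ⟨fun α => TSJ.TaQ (sp x (∏ i, G i ^ (α i : ℕ))) (sp x F), ?_, fun α => rfl⟩
      rw [hV, Finset.mem_filter]
      constructor
      · rw [Fintype.mem_piFinset]
        intro α
        rw [Finset.mem_Icc]
        have := TaQ_sp_abs_le F (∏ i, G i ^ (α i : ℕ)) x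
        rw [abs_le] at this
        exact this
      · rw [← cnt_eq_sum_TaQ]
        exact_mod_cast hx
    · rintro ⟨v, hv, hvx⟩
      rw [hV, Finset.mem_filter] at hv
      have : (1:ℚ) ≤ (cnt F G σ x : ℚ) := by
        rw [cnt_eq_sum_TaQ]
        refine le_trans hv.2 (le_of_eq ?_)
        refine Finset.sum_congr rfl fun α _ => ?_
        rw [hvx α]
      exact_mod_cast this
  rw [hset]
  refine isSemialgebraic_biUnion V _ fun v _ => ?_
  exact isSemialgebraic_iInter _ fun α =>
    SA_TaQ F.natDegree F (∏ i, G i ^ (α i : ℕ)) le_rfl (v α)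

end TSP
/-! ### The strict-inequalities case via Rolle -/
namespace TSR
open Polynomial

lemma sg_locally_const {p : ℝ[X]} {y : ℝ} (hy : p.eval y ≠ 0) :
    ∀ᶠ z in nhds y, sg (p.eval z) = sg (p.eval y) := by
  rcases lt_or_gt_of_ne hy with h | h
  · have hopen : IsOpen {z : ℝ | p.eval z < 0} := isOpen_lt p.continuous continuous_const
    filter_upwards [hopen.mem_nhds h] with z hz
    rw [sg_neg hz, sg_neg h]
  · have hopen : IsOpen {z : ℝ | 0 < p.eval z} := isOpen_lt continuous_const p.continuous
    filter_upwards [hopen.mem_nhds h] with z hz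
    rw [sg_pos hz, sg_pos h]

variable {k : ℕ} (f : Fin k → ℝ[X]) (σ : Fin k → ℤ)

lemma phi_locally_const (hσ : ∀ i, σ i ≠ 0) {y : ℝ} (hy : ∀ i, sg ((f i).eval y) = σ i) :
    ∃ δ > 0, ∀ z : ℝ, |z - y| < δ → ∀ i, sg ((f i).eval z) = σ i := by
  have h1 : ∀ᶠ z in nhds y, ∀ i, sg ((f i).eval z) = σ i := by
    rw [Filter.eventually_all]
    intro i
    have hne : (f i).eval y ≠ 0 := by
      intro h0
      exact hσ i (by rw [← hy i, h0, sg_zero])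
    filter_upwards [sg_locally_const hne] with z hz
    rw [hz, hy i]
  rcases Metric.eventually_nhds_iff.1 h1 with ⟨δ, hδ, hball⟩
  exact ⟨δ, hδ, fun z hz => hball (by simpa [Real.dist_eq] using hz)⟩

/-- below / above all roots of all members -/
lemma exists_low (hf : ∀ i, f i ≠ 0) (c : ℝ) :
    ∃ t : ℝ, t ≤ c ∧ ∀ i, sg ((f i).eval t) = TSJ.minf (f i) := by
  classical
  set S : Finset ℝ := insert c (Finset.univ.biUnion fun i => (f i).roots.toFinset) with hS
  have hcS : c ∈ S := Finset.mem_insert_self _ _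
  set t := S.min' ⟨c, hcS⟩ - 1 with ht
  refine ⟨t, by linarith [S.min'_le c hcS], fun i => ?_⟩
  refine TSJ.sg_eval_of_lt_roots (hf i) fun y hy => ?_
  have hyS : y ∈ S := Finset.mem_insert_of_mem
    (Finset.mem_biUnion.2 ⟨i, Finset.mem_univ i, Multiset.mem_toFinset.2 hy⟩)
  have := S.min'_le y hyS
  linarith

lemma exists_high (hf : ∀ i, f i ≠ 0) (c : ℝ) :
    ∃ t : ℝ, c ≤ t ∧ ∀ i, sg ((f i).eval t) = TSJ.einf (f i) := by
  classical
  set S : Finset ℝ := insert c (Finset.univ.biUnion fun i => (f i).roots.toFinset) with hS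
  have hcS : c ∈ S := Finset.mem_insert_self _ _
  set t := S.max' ⟨c, hcS⟩ + 1 with ht
  refine ⟨t, by linarith [S.le_max' c hcS], fun i => ?_⟩
  refine TSJ.sg_eval_of_roots_lt (hf i) fun y hy => ?_
  have hyS : y ∈ S := Finset.mem_insert_of_mem
    (Finset.mem_biUnion.2 ⟨i, Finset.mem_univ i, Multiset.mem_toFinset.2 hy⟩)
  have := S.le_max' y hyS
  linarith

theorem strict_case (hf : ∀ i, f i ≠ 0) (hσ : ∀ i, σ i ≠ 0) :
    (∃ y : ℝ, ∀ i, sg ((f i).eval y) = σ i) ↔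
      ((∀ i, TSJ.minf (f i) = σ i) ∨ (∀ i, TSJ.einf (f i) = σ i) ∨
        (∃ y : ℝ, (derivative (∏ i, f i)).eval y = 0 ∧ ∀ i, sg ((f i).eval y) = σ i)) := by
  constructor
  · rintro ⟨y₀, hy₀⟩
    by_cases hBL : ∃ z ≤ y₀, ¬ ∀ i, sg ((f i).eval z) = σ i
    on_goal 2 =>
      -- Φ holds on all of (-∞, y₀]
      push_neg at hBL
      left
      obtain ⟨t, htc, hts⟩ := exists_low f hf y₀
      intro i
      rw [← hts i, hBL t htc i]
    by_cases hBR : ∃ z, y₀ ≤ z ∧ ¬ ∀ i, sg ((f i).eval z) = σ i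
    on_goal 2 =>
      push_neg at hBR
      right; left
      obtain ⟨t, htc, hts⟩ := exists_high f hf y₀
      intro i
      rw [← hts i, hBR t htc i]
    right; right
    classical
    set Φ : ℝ → Prop := fun z => ∀ i, sg ((f i).eval z) = σ i with hΦ
    set SL : Set ℝ := {z | z ≤ y₀ ∧ ¬ Φ z} with hSL
    set SR : Set ℝ := {z | y₀ ≤ z ∧ ¬ Φ z} with hSR
    obtain ⟨zL, hzL1, hzL2⟩ := hBL
    obtain ⟨zR, hzR1, hzR2⟩ := hBR
    have hSLne : SL.Nonempty := ⟨zL, hzL1, hzL2⟩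
    have hSRne : SR.Nonempty := ⟨zR, hzR1, hzR2⟩
    have hSLbdd : BddAbove SL := ⟨y₀, fun z hz => hz.1⟩
    have hSRbdd : BddBelow SR := ⟨y₀, fun z hz => hz.1⟩
    set a := sSup SL with ha
    set b := sInf SR with hb
    have hay₀ : a ≤ y₀ := csSup_le hSLne fun z hz => hz.1
    have hy₀b : y₀ ≤ b := le_csInf hSRne fun z hz => hz.1
    obtain ⟨δ₀, hδ₀, hball₀⟩ := phi_locally_const f σ hσ hy₀
    have haylt : a < y₀ := by
      have hub : ∀ z ∈ SL, z ≤ y₀ - δ₀ / 2 := by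
        intro z hz
        by_contra hzgt
        push_neg at hzgt
        exact hz.2 (hball₀ z (by rw [abs_sub_lt_iff]; constructor <;> [linarith [hz.1]; linarith [hz.1]]))
      have := csSup_le hSLne hub
      linarith
    have hy₀blt : y₀ < b := by
      have hlb : ∀ z ∈ SR, y₀ + δ₀ / 2 ≤ z := by
        intro z hz
        by_contra hzgt
        push_neg at hzgt
        exact hz.2 (hball₀ z (by rw [abs_sub_lt_iff]; constructor <;> [linarith [hz.1]; linarith [hz.1]]))
      have := le_csInf hSRne hlb
      linarith
    have hΦmidL : ∀ z, a < z → z ≤ y₀ → Φ z := by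
      intro z h1 h2
      by_contra hz
      exact absurd (le_csSup hSLbdd (show z ∈ SL from ⟨h2, hz⟩)) (not_le.2 h1)
    have hΦmidR : ∀ z, y₀ ≤ z → z < b → Φ z := by
      intro z h1 h2
      by_contra hz
      exact absurd (csInf_le hSRbdd (show z ∈ SR from ⟨h1, hz⟩)) (not_le.2 h2)
    -- some member vanishes at a
    have hva : ∃ i, (f i).eval a = 0 := by
      by_contra hno
      push_neg at hno
      have hΦa : Φ a := by
        intro i
        obtain ⟨δ, hδ, hball⟩ := Metric.eventually_nhds_iff.1 (sg_locally_const (hno i))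
        set z := min y₀ (a + δ / 2) with hz
        have hz1 : a < z := by
          rw [hz]; exact lt_min haylt (by linarith)
        have hz2 : z ≤ y₀ := min_le_left _ _
        have hzd : dist z a < δ := by
          rw [Real.dist_eq, abs_sub_lt_iff]
          constructor
          · have : z ≤ a + δ / 2 := min_le_right _ _
            linarith
          · linarith
        rw [← hball hzd]
        exact hΦmidL z hz1 hz2 i
      obtain ⟨δ, hδ, hball⟩ := phi_locally_const f σ hσ hΦa
      obtain ⟨z, hzSL, hzgt⟩ := exists_lt_of_lt_csSup hSLne (show a - δ / 2 < a by linarith)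
      refine hzSL.2 (hball z ?_)
      have hzlea : z ≤ a := le_csSup hSLbdd hzSL
      rw [abs_sub_lt_iff]
      constructor <;> linarith
    have hvb : ∃ i, (f i).eval b = 0 := by
      by_contra hno
      push_neg at hno
      have hΦb : Φ b := by
        intro i
        obtain ⟨δ, hδ, hball⟩ := Metric.eventually_nhds_iff.1 (sg_locally_const (hno i))
        set z := max y₀ (b - δ / 2) with hz
        have hz1 : z < b := by
          rw [hz]; exact max_lt hy₀blt (by linarith)
        have hz2 : y₀ ≤ z := le_max_left _ _
        have hzd : dist z b < δ := by
          rw [Real.dist_eq, abs_sub_lt_iff]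
          constructor
          · linarith
          · have : b - δ / 2 ≤ z := le_max_right _ _
            linarith
        rw [← hball hzd]
        exact hΦmidR z hz2 hz1 i
      obtain ⟨δ, hδ, hball⟩ := phi_locally_const f σ hσ hΦb
      obtain ⟨z, hzSR, hzlt⟩ := exists_lt_of_csInf_lt hSRne (show sInf SR < b + δ / 2 by rw [← hb]; linarith)
      refine hzSR.2 (hball z ?_)
      have hzgeb : b ≤ z := csInf_le hSRbdd hzSR
      rw [abs_sub_lt_iff]
      constructor <;> linarith
    -- Rolle on the product
    set W : ℝ[X] := ∏ i, f i with hW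
    have hWa : W.eval a = 0 := by
      obtain ⟨i, hi⟩ := hva
      rw [hW, eval_prod]
      exact Finset.prod_eq_zero (Finset.mem_univ i) hi
    have hWb : W.eval b = 0 := by
      obtain ⟨i, hi⟩ := hvb
      rw [hW, eval_prod]
      exact Finset.prod_eq_zero (Finset.mem_univ i) hi
    obtain ⟨c, hc, hc0⟩ := exists_deriv_eq_zero (f := fun z => W.eval z)
      (lt_trans haylt hy₀blt) W.continuous.continuousOn (by show W.eval a = W.eval b; rw [hWa, hWb])
    refine ⟨c, ?_, ?_⟩
    · rw [← Polynomial.deriv]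
      exact hc0
    · rcases le_or_gt c y₀ with hcy | hcy
      · exact hΦmidL c hc.1 hcy
      · exact hΦmidR c hcy.le hc.2
  · rintro (hm | he | ⟨y, -, hy⟩)
    · obtain ⟨t, -, hts⟩ := exists_low f hf 0
      exact ⟨t, fun i => by rw [hts i, hm i]⟩
    · obtain ⟨t, -, hts⟩ := exists_high f hf 0
      exact ⟨t, fun i => by rw [hts i, he i]⟩
    · exact ⟨y, hy⟩

end TSR
/-! ### Terminal case: all members honest -/
namespace TSP
open Polynomial

variable {n : ℕ}

lemma cnt_pos_iff {x : Fin n → ℝ} {F : (MvP n)[X]} (hsp : sp x F ≠ 0) {k : ℕ}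
    (G : Fin k → (MvP n)[X]) (σ : Fin k → ℤ) :
    1 ≤ cnt F G σ x ↔ ∃ y, (sp x F).eval y = 0 ∧ ∀ i, sg ((sp x (G i)).eval y) = σ i := by
  unfold cnt
  rw [Nat.one_le_iff_ne_zero, ← Nat.pos_iff_ne_zero, Finset.card_pos]
  constructor
  · rintro ⟨y, hy⟩
    rw [Finset.mem_filter, Multiset.mem_toFinset, mem_roots hsp] at hy
    exact ⟨y, hy.1, hy.2⟩
  · rintro ⟨y, h1, h2⟩
    exact ⟨y, Finset.mem_filter.2 ⟨Multiset.mem_toFinset.2 ((mem_roots hsp).2 h1), h2⟩⟩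

lemma sp_derivative_prod (x : Fin n → ℝ) {k : ℕ} (F : Fin k → (MvP n)[X]) :
    sp x (derivative (∏ j, F j)) = derivative (∏ j, sp x (F j)) := by
  unfold sp
  have h1 : (∏ j, (F j).map (MvPolynomial.eval x)) = (∏ j, F j).map (MvPolynomial.eval x) := by
    rw [← Polynomial.coe_mapRingHom, ← map_prod]
  rw [h1, derivative_map]

lemma AUX_terminal (Kp : ℕ) (Fp : Fin Kp → (MvP n)[X]) (σp ssp : Fin Kp → ℤ)
    (hdeg : ∀ j, 1 ≤ (Fp j).natDegree) (hs : ∀ j, ssp j ≠ 0) :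
    IsSemialgebraic' ({x : Fin n → ℝ | ∃ y : ℝ, ∀ j, sg ((sp x (Fp j)).eval y) = σp j} ∩
      {x | ∀ j, sg (MvPolynomial.eval x (Fp j).leadingCoeff) = ssp j}) := by
  classical
  have hPcSA : IsSemialgebraic' {x : Fin n → ℝ |
      ∀ j, sg (MvPolynomial.eval x (Fp j).leadingCoeff) = ssp j} :=
    isSemialgebraic_sgn_family _ _
  have hfacts : ∀ x, (∀ j, sg (MvPolynomial.eval x (Fp j).leadingCoeff) = ssp j) →
      ∀ j, sp x (Fp j) ≠ 0 ∧ (sp x (Fp j)).natDegree = (Fp j).natDegree ∧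
        (sp x (Fp j)).leadingCoeff = MvPolynomial.eval x (Fp j).leadingCoeff := by
    intro x hx j
    refine sp_facts ?_
    intro h0
    exact hs j (by rw [← hx j, h0, sg_zero])
  by_cases hzero : ∃ j₀, σp j₀ = 0
  · obtain ⟨j₀, hj₀⟩ := hzero
    refine SA_inter_congr (SA_cnt_pos (Fp j₀) Fp σp) hPcSA fun x hx => ?_
    simp only [Set.mem_setOf_eq] at hx ⊢
    rw [cnt_pos_iff (hfacts x hx j₀).1 Fp σp]
    constructor
    · rintro ⟨y, hy⟩
      refine ⟨y, ?_, hy⟩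
      have := hy j₀
      rw [hj₀, sg_eq_zero_iff] at this
      exact this
    · rintro ⟨y, -, hy⟩
      exact ⟨y, hy⟩
  · push_neg at hzero
    rcases Nat.eq_zero_or_pos Kp with hK | hK
    · subst hK
      have htriv : {x : Fin n → ℝ | ∃ y : ℝ, ∀ j : Fin 0, sg ((sp x (Fp j)).eval y) = σp j}
          = Set.univ := by
        ext x
        simp only [Set.mem_setOf_eq, Set.mem_univ, iff_true]
        exact ⟨0, fun j => j.elim0⟩
      rw [htriv, Set.univ_inter]
      exact hPcSA
    · set W : (MvP n)[X] := ∏ j, Fp j with hW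
      set S0 : Set (Fin n → ℝ) :=
        {x : Fin n → ℝ | ∀ j, (-1) ^ ((Fp j).natDegree) * ssp j = σp j} ∪
          ({x : Fin n → ℝ | ∀ j, ssp j = σp j} ∪
            {x | 1 ≤ cnt (derivative W) Fp σp x}) with hS0
      have hS0SA : IsSemialgebraic' S0 :=
        (SA_const _).union ((SA_const _).union (SA_cnt_pos _ _ _))
      refine SA_inter_congr hS0SA hPcSA fun x hx => ?_
      simp only [Set.mem_setOf_eq] at hx
      have hf : ∀ j, sp x (Fp j) ≠ 0 := fun j => (hfacts x hx j).1
      have hWne : (∏ j, sp x (Fp j)) ≠ 0 := Finset.prod_ne_zero_iff.2 fun j _ => hf j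
      have hWdeg : 1 ≤ (∏ j, sp x (Fp j)).natDegree := by
        rw [Polynomial.natDegree_prod _ _ fun j _ => hf j]
        obtain ⟨j⟩ := Fin.pos_iff_nonempty.1 hK
        calc 1 ≤ (sp x (Fp j)).natDegree := by rw [(hfacts x hx j).2.1]; exact hdeg j
          _ ≤ ∑ i, (sp x (Fp i)).natDegree :=
            Finset.single_le_sum (f := fun i => (sp x (Fp i)).natDegree)
              (fun i _ => Nat.zero_le _) (Finset.mem_univ j)
      have hder_ne : derivative (∏ j, sp x (Fp j)) ≠ 0 := by
        intro h0
        have := natDegree_eq_zero_of_derivative_eq_zero h0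
        omega
      have hspder : sp x (derivative W) ≠ 0 := by
        rw [sp_derivative_prod]
        exact hder_ne
      have hstrict := TSR.strict_case (fun j => sp x (Fp j)) σp hf hzero
      simp only [Set.mem_setOf_eq, Set.mem_union]
      rw [hstrict]
      constructor
      · rintro (hm | he | ⟨y, hy0, hy⟩)
        · left
          intro j
          have := hm j
          rw [TSJ.minf, (hfacts x hx j).2.1, (hfacts x hx j).2.2, hx j] at this
          exact this
        · right; left
          intro j
          have := he j
          rw [TSJ.einf, (hfacts x hx j).2.2, hx j] at this
          exact this
        · right; right
          show 1 ≤ cnt (derivative W) Fp σp x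
          rw [cnt_pos_iff hspder Fp σp]
          refine ⟨y, ?_, hy⟩
          rw [sp_derivative_prod]
          exact hy0
      · rintro (hm | he | hcnt)
        · left
          intro j
          rw [TSJ.minf, (hfacts x hx j).2.1, (hfacts x hx j).2.2, hx j]
          exact hm j
        · right; left
          intro j
          rw [TSJ.einf, (hfacts x hx j).2.2, hx j]
          exact he j
        · right; right
          rw [Set.mem_setOf_eq, cnt_pos_iff hspder Fp σp] at hcnt
          obtain ⟨y, hy0, hy⟩ := hcnt
          refine ⟨y, ?_, hy⟩
          rw [sp_derivative_prod] at hy0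
          exact hy0

end TSP
/-! ### Main induction -/
namespace TSP
open Polynomial

variable {n : ℕ}

def Tset (Kp : ℕ) (Fp : Fin Kp → (MvP n)[X]) (σp : Fin Kp → ℤ)
    (K : ℕ) (F : Fin K → (MvP n)[X]) (σ : Fin K → ℤ) : Set (Fin n → ℝ) :=
  {x | ∃ y : ℝ, (∀ j, sg ((sp x (Fp j)).eval y) = σp j) ∧
    (∀ j, sg ((sp x (F j)).eval y) = σ j)}

def Pc (Kp : ℕ) (Fp : Fin Kp → (MvP n)[X]) (ssp : Fin Kp → ℤ) : Set (Fin n → ℝ) :=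
  {x | ∀ j, sg (MvPolynomial.eval x (Fp j).leadingCoeff) = ssp j}

lemma forall_succ_iff {K : ℕ} (P : Fin (K + 1) → Prop) :
    (∀ j, P j) ↔ (∀ j : Fin K, P j.castSucc) ∧ P (Fin.last K) :=
  ⟨fun h => ⟨fun j => h _, h _⟩, fun h j => Fin.lastCases h.2 h.1 j⟩

lemma Pc_SA (Kp : ℕ) (Fp : Fin Kp → (MvP n)[X]) (ssp : Fin Kp → ℤ) :
    IsSemialgebraic' (Pc Kp Fp ssp) :=
  isSemialgebraic_sgn_family _ _

theorem AUX : ∀ (μ : ℕ) (Kp : ℕ) (Fp : Fin Kp → (MvP n)[X]) (σp ssp : Fin Kp → ℤ)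
    (K : ℕ) (F : Fin K → (MvP n)[X]) (σ : Fin K → ℤ),
    (∀ j, 1 ≤ (Fp j).natDegree) → (∀ j, ssp j ≠ 0) →
    K + ∑ j, (F j).natDegree ≤ μ →
    IsSemialgebraic' (Tset Kp Fp σp K F σ ∩ Pc Kp Fp ssp) := by
  intro μ
  induction μ using Nat.strong_induction_on with
  | _ μ ih =>
  intro Kp Fp σp ssp K F σ hdeg hss hμ
  rcases K with _ | K'
  · -- no unprocessed members
    have hT : Tset Kp Fp σp 0 F σ = {x | ∃ y : ℝ, ∀ j, sg ((sp x (Fp j)).eval y) = σp j} := by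
      ext x
      unfold Tset
      simp only [Set.mem_setOf_eq]
      exact ⟨fun ⟨y, h1, _⟩ => ⟨y, h1⟩, fun ⟨y, h1⟩ => ⟨y, h1, fun j => j.elim0⟩⟩
    rw [hT]
    exact AUX_terminal Kp Fp σp ssp hdeg hss
  · set L := F (Fin.last K') with hL
    set F₀ : Fin K' → (MvP n)[X] := fun j => F j.castSucc with hF₀
    set σ₀ : Fin K' → ℤ := fun j => σ j.castSucc with hσ₀
    have hsum : ∑ j, (F j).natDegree
        = (∑ j : Fin K', (F₀ j).natDegree) + L.natDegree := Fin.sum_univ_castSucc _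
    apply piece_split _ L.leadingCoeff
    intro s
    set Ps := {x : Fin n → ℝ | sg (MvPolynomial.eval x L.leadingCoeff) = s} with hPs
    have hPsSA : IsSemialgebraic' Ps := isSemialgebraic_sgn _ _
    rcases eq_or_ne s 0 with rfl | hs0
    · rcases Nat.eq_zero_or_pos L.natDegree with hL0 | hLpos
      · -- constant member, vanishing: sp x L = 0 on the piece
        by_cases hσl : σ (Fin.last K') = 0
        · refine SA_inter_congr2 (T0 := Tset Kp Fp σp (K' + 1) F σ)
            (ih (μ - 1) (by omega) Kp Fp σp ssp K' F₀ σ₀ hdeg hss (by omega))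
            (Pc_SA _ _ _) hPsSA fun x hx1 hx2 => ?_
          have hspL : sp x L = 0 := by
            have hev : MvPolynomial.eval x L.leadingCoeff = 0 := sg_eq_zero_iff.1 hx2
            have hLC : L = Polynomial.C (L.coeff 0) := eq_C_of_natDegree_eq_zero hL0
            conv_lhs => rw [hLC]
            unfold sp
            rw [Polynomial.map_C]
            have hl : L.leadingCoeff = L.coeff 0 := by rw [leadingCoeff, hL0]
            rw [← hl, hev, map_zero]
          constructor
          · rintro ⟨y, h1, h2⟩
            exact ⟨⟨y, h1, fun j => h2 j.castSucc⟩, hx1⟩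
          · rintro ⟨⟨y, h1, h2⟩, -⟩
            refine ⟨y, h1, (forall_succ_iff _).2 ⟨h2, ?_⟩⟩
            rw [← hL, hspL]
            simpa [sg_zero] using hσl.symm
        · refine SA_inter_congr2 (S0 := (∅ : Set (Fin n → ℝ)))
            isSemialgebraic_empty (Pc_SA _ _ _) hPsSA fun x hx1 hx2 => ?_
          have hspL : sp x L = 0 := by
            have hev : MvPolynomial.eval x L.leadingCoeff = 0 := sg_eq_zero_iff.1 hx2
            have hLC : L = Polynomial.C (L.coeff 0) := eq_C_of_natDegree_eq_zero hL0
            conv_lhs => rw [hLC]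
            unfold sp
            rw [Polynomial.map_C]
            have hl : L.leadingCoeff = L.coeff 0 := by rw [leadingCoeff, hL0]
            rw [← hl, hev, map_zero]
          simp only [Set.mem_empty_iff_false, iff_false]
          rintro ⟨y, -, h2⟩
          have := h2 (Fin.last K')
          rw [← hL, hspL] at this
          simp [sg_zero] at this
          exact hσl this.symm
      · -- drop the leading coefficient of L
        set F' : Fin (K' + 1) → (MvP n)[X] := Fin.snoc F₀ L.eraseLead with hF'
        have hsum' : ∑ j, (F' j).natDegree
            = (∑ j : Fin K', (F₀ j).natDegree) + L.eraseLead.natDegree := by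
          rw [Fin.sum_univ_castSucc]
          congr 1
          · exact Finset.sum_congr rfl fun j _ => by rw [hF', Fin.snoc_castSucc]
          · rw [hF', Fin.snoc_last]
        have hmeas : K' + 1 + ∑ j, (F' j).natDegree ≤ μ - 1 := by
          have hel := eraseLead_natDegree_le L
          omega
        refine SA_inter_congr2 (T0 := Tset Kp Fp σp (K' + 1) F σ)
          (ih (μ - 1) (by omega) Kp Fp σp ssp (K' + 1) F' σ hdeg hss hmeas)
          (Pc_SA _ _ _) hPsSA fun x hx1 hx2 => ?_
        have hspL : sp x (L.eraseLead) = sp x L := sp_eraseLead_eq (sg_eq_zero_iff.1 hx2)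
        have hmem : ∀ (j : Fin (K' + 1)) (y : ℝ),
            sg ((sp x (F' j)).eval y) = σ j ↔ sg ((sp x (F j)).eval y) = σ j := by
          intro j y
          refine Fin.lastCases ?_ (fun i => ?_) j
          · rw [hF', Fin.snoc_last, hspL, hL]
          · rw [hF', Fin.snoc_castSucc, hF₀]
        constructor
        · rintro ⟨y, h1, h2⟩
          exact ⟨⟨y, h1, fun j => (hmem j y).2 (h2 j)⟩, hx1⟩
        · rintro ⟨⟨y, h1, h2⟩, -⟩
          exact ⟨y, h1, fun j => (hmem j y).1 (h2 j)⟩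
    · rcases Nat.eq_zero_or_pos L.natDegree with hL0 | hLpos
      · -- constant member with nonzero value: condition is `s = σ last`
        have hspL : ∀ x ∈ Ps, sp x L = Polynomial.C (MvPolynomial.eval x (L.coeff 0)) ∧
            sg (MvPolynomial.eval x (L.coeff 0)) = s := by
          intro x hx
          have hLC : L = Polynomial.C (L.coeff 0) := eq_C_of_natDegree_eq_zero hL0
          constructor
          · conv_lhs => rw [hLC]
            unfold sp
            rw [Polynomial.map_C]
          · have hl : L.leadingCoeff = L.coeff 0 := by rw [leadingCoeff, hL0]
            rw [← hl]
            exact hx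
        by_cases heq : s = σ (Fin.last K')
        · refine SA_inter_congr2 (T0 := Tset Kp Fp σp (K' + 1) F σ)
            (ih (μ - 1) (by omega) Kp Fp σp ssp K' F₀ σ₀ hdeg hss (by omega))
            (Pc_SA _ _ _) hPsSA fun x hx1 hx2 => ?_
          obtain ⟨hC, hsg⟩ := hspL x hx2
          constructor
          · rintro ⟨y, h1, h2⟩
            exact ⟨⟨y, h1, fun j => h2 j.castSucc⟩, hx1⟩
          · rintro ⟨⟨y, h1, h2⟩, -⟩
            refine ⟨y, h1, (forall_succ_iff _).2 ⟨h2, ?_⟩⟩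
            rw [← hL, hC]
            simpa using heq ▸ hsg
        · refine SA_inter_congr2 (S0 := (∅ : Set (Fin n → ℝ)))
            isSemialgebraic_empty (Pc_SA _ _ _) hPsSA fun x hx1 hx2 => ?_
          obtain ⟨hC, hsg⟩ := hspL x hx2
          simp only [Set.mem_empty_iff_false, iff_false]
          rintro ⟨y, -, h2⟩
          have := h2 (Fin.last K')
          rw [← hL, hC] at this
          simp only [eval_C] at this
          exact heq (by rw [← hsg, this])
      · -- promote L to the processed family
        set Fp' : Fin (Kp + 1) → (MvP n)[X] := Fin.snoc Fp L with hFp'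
        set σp' : Fin (Kp + 1) → ℤ := Fin.snoc σp (σ (Fin.last K')) with hσp'
        set ssp' : Fin (Kp + 1) → ℤ := Fin.snoc ssp s with hssp'
        have hdeg' : ∀ j, 1 ≤ (Fp' j).natDegree := by
          intro j
          refine Fin.lastCases ?_ (fun i => ?_) j
          · rw [hFp', Fin.snoc_last]; exact hLpos
          · rw [hFp', Fin.snoc_castSucc]; exact hdeg i
        have hss' : ∀ j, ssp' j ≠ 0 := by
          intro j
          refine Fin.lastCases ?_ (fun i => ?_) j
          · rw [hssp', Fin.snoc_last]; exact hs0
          · rw [hssp', Fin.snoc_castSucc]; exact hss i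
        refine SA_inter_congr2 (T0 := Tset Kp Fp σp (K' + 1) F σ)
          (ih (μ - 1) (by omega) (Kp + 1) Fp' σp' ssp' K' F₀ σ₀ hdeg' hss' (by omega))
          (Pc_SA _ _ _) hPsSA fun x hx1 hx2 => ?_
        have hPc' : x ∈ Pc (Kp + 1) Fp' ssp' := by
          intro j
          refine Fin.lastCases ?_ (fun i => ?_) j
          · rw [hFp', hssp', Fin.snoc_last, Fin.snoc_last]
            exact hx2
          · rw [hFp', hssp', Fin.snoc_castSucc, Fin.snoc_castSucc]
            exact hx1 i
        constructor
        · rintro ⟨y, h1, h2⟩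
          refine ⟨⟨y, ?_, fun j => h2 j.castSucc⟩, hPc'⟩
          intro j
          refine Fin.lastCases ?_ (fun i => ?_) j
          · rw [hFp', hσp', Fin.snoc_last, Fin.snoc_last]
            exact h2 (Fin.last K')
          · rw [hFp', hσp', Fin.snoc_castSucc, Fin.snoc_castSucc]
            exact h1 i
        · rintro ⟨⟨y, h1, h2⟩, -⟩
          refine ⟨y, fun j => ?_, (forall_succ_iff _).2 ⟨h2, ?_⟩⟩
          · have := h1 j.castSucc
            rw [hFp', hσp', Fin.snoc_castSucc, Fin.snoc_castSucc] at this
            exact this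
          · have := h1 (Fin.last Kp)
            rw [hFp', hσp', Fin.snoc_last, Fin.snoc_last] at this
            exact this

theorem SA_exists (K : ℕ) (F : Fin K → (MvP n)[X]) (σ : Fin K → ℤ) :
    IsSemialgebraic' {x : Fin n → ℝ | ∃ y : ℝ, ∀ j, sg ((sp x (F j)).eval y) = σ j} := by
  have h := AUX (K + ∑ j, (F j).natDegree) 0 Fin.elim0 Fin.elim0 Fin.elim0 K F σ
    (fun j => j.elim0) (fun j => j.elim0) le_rfl
  have hPc : Pc 0 Fin.elim0 Fin.elim0 = (Set.univ : Set (Fin n → ℝ)) := by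
    ext x; simp only [Pc, Set.mem_setOf_eq, Set.mem_univ, iff_true]
    exact fun j => j.elim0
  have hT : Tset 0 Fin.elim0 Fin.elim0 K F σ
      = {x : Fin n → ℝ | ∃ y : ℝ, ∀ j, sg ((sp x (F j)).eval y) = σ j} := by
    ext x
    unfold Tset
    simp only [Set.mem_setOf_eq]
    exact ⟨fun ⟨y, _, h2⟩ => ⟨y, h2⟩, fun ⟨y, h2⟩ => ⟨y, fun j => j.elim0, h2⟩⟩
  rw [hPc, hT, Set.inter_univ] at h
  exact h

end TSP
/-! ### Bridge to the projection statement -/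
namespace TSP
open Polynomial

variable {n : ℕ}

/-- renaming that sends the last variable to `0` and shifts the others up -/
def ρ (n : ℕ) : Fin (n + 1) → Fin (n + 1) := fun i =>
  if h : (i : ℕ) < n then Fin.succ ⟨i, h⟩ else 0

/-- Convert a polynomial in `n+1` variables into a univariate polynomial in the last
variable, with coefficients polynomials in the other variables. -/
noncomputable def toPoly (P : MvPolynomial (Fin (n + 1)) ℝ) : (MvP n)[X] :=
  MvPolynomial.finSuccEquiv ℝ n (MvPolynomial.rename (ρ n) P)

lemma cons_comp_ρ (x : Fin n → ℝ) (y : ℝ) :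
    (Fin.cons y x : Fin (n + 1) → ℝ) ∘ (ρ n) = Fin.snoc x y := by
  funext i
  rcases Fin.eq_castSucc_or_eq_last i with ⟨j, rfl⟩ | rfl
  · have hj : ((j.castSucc : Fin (n + 1)) : ℕ) < n := j.2
    simp only [Function.comp_apply, ρ, dif_pos hj]
    rw [Fin.snoc_castSucc]
    have : (⟨((j.castSucc : Fin (n+1)) : ℕ), hj⟩ : Fin n) = j := by
      ext; rfl
    rw [this, Fin.cons_succ]
  · have hn : ¬ ((Fin.last n : Fin (n + 1)) : ℕ) < n := by simp
    simp only [Function.comp_apply, ρ, dif_neg hn]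
    rw [Fin.snoc_last, Fin.cons_zero]

lemma toPoly_eval (P : MvPolynomial (Fin (n + 1)) ℝ) (x : Fin n → ℝ) (y : ℝ) :
    (sp x (toPoly P)).eval y = MvPolynomial.eval (Fin.snoc x y) P := by
  unfold toPoly sp
  rw [← MvPolynomial.eval_eq_eval_mv_eval', MvPolynomial.eval_rename, cons_comp_ρ]

lemma image_basic (p : MvPolynomial (Fin (n + 1)) ℝ) (k : ℕ)
    (q : Fin k → MvPolynomial (Fin (n + 1)) ℝ) :
    IsSemialgebraic' ((fun x' : Fin (n + 1) → ℝ => x' ∘ Fin.castSucc) ''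
      {x' | MvPolynomial.eval x' p = 0 ∧ ∀ i : Fin k, 0 < MvPolynomial.eval x' (q i)}) := by
  classical
  set G : Fin (k + 1) → (MvP n)[X] :=
    Fin.cons (toPoly p) (fun i => toPoly (q i)) with hG
  set σ : Fin (k + 1) → ℤ := Fin.cons 0 (fun _ => 1) with hσ
  have hset : (fun x' : Fin (n + 1) → ℝ => x' ∘ Fin.castSucc) ''
      {x' | MvPolynomial.eval x' p = 0 ∧ ∀ i : Fin k, 0 < MvPolynomial.eval x' (q i)}
      = {x : Fin n → ℝ | ∃ y : ℝ, ∀ j, sg ((sp x (G j)).eval y) = σ j} := by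
    ext x
    simp only [Set.mem_image, Set.mem_setOf_eq]
    constructor
    · rintro ⟨x', ⟨h1, h2⟩, rfl⟩
      refine ⟨x' (Fin.last n), ?_⟩
      have hx' : Fin.snoc (x' ∘ Fin.castSucc) (x' (Fin.last n)) = x' := by
        exact Fin.snoc_init_self x'
      intro j
      refine Fin.cases ?_ (fun i => ?_) j
      · rw [hG, hσ, Fin.cons_zero, Fin.cons_zero, toPoly_eval, hx', sg_eq_zero_iff]
        exact h1
      · rw [hG, hσ, Fin.cons_succ, Fin.cons_succ, toPoly_eval, hx', sg_eq_one_iff]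
        exact h2 i
    · rintro ⟨y, hy⟩
      refine ⟨Fin.snoc x y, ⟨?_, ?_⟩, ?_⟩
      · have := hy 0
        rw [hG, hσ, Fin.cons_zero, Fin.cons_zero, toPoly_eval, sg_eq_zero_iff] at this
        exact this
      · intro i
        have := hy i.succ
        rw [hG, hσ, Fin.cons_succ, Fin.cons_succ, toPoly_eval, sg_eq_one_iff] at this
        exact this
      · funext i
        simp
  rw [hset]
  exact SA_exists (k + 1) G σ

theorem main {A : Set (Fin (n + 1) → ℝ)} (hA : IsSemialgebraic' A) :
    IsSemialgebraic' ((fun x : Fin (n + 1) → ℝ => x ∘ Fin.castSucc) '' A) := by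
  obtain ⟨m, B, hB, rfl⟩ := hA
  rw [Set.image_iUnion]
  refine isSemialgebraic_iUnion_fin _ fun i => ?_
  obtain ⟨p, k, q, hq⟩ := hB i
  rw [hq]
  exact image_basic p k q

end TSP

lemma isSemialgebraic_iff' {n : ℕ} {A : Set (Fin n → ℝ)} :
    IsSemialgebraic A ↔ IsSemialgebraic' A := Iff.rfl

/-- Tarski–Seidenberg: the image of a semialgebraic subset of `ℝ^{n+1}` under the
linear projection `ℝ^{n+1} → ℝⁿ` forgetting the last coordinate is semialgebraic. -/
theorem tarski_seidenberg {n : ℕ} (A : Set (Fin (n + 1) → ℝ))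
    (hA : IsSemialgebraic A) :
    IsSemialgebraic ((fun x : Fin (n + 1) → ℝ => x ∘ Fin.castSucc) '' A) := by
  rw [isSemialgebraic_iff'] at hA ⊢
  exact TSP.main hA
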